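/- arXiv:1105.4214 — 9 statements merged into one kernel-verified Lean document; each statement's English description precedes it below -/
import Mathlib

section
/- Let α ∈ (0,2] be a real number and let X and Y be independent, identically distributed real-valued random variables with E|X|^α < ∞. Then E|X − Y|^α ≤ E|X + Y|^α. -/
open MeasureTheory ProbabilityTheory Real Set

section Aux

lemma kernel_meas {α : ℝ} (z : ℝ) :
    Measurable fun t : ℝ => (1 - Real.cos (z*t)) * t ^ (-1-α) :=
  by fun_prop

lemma kernel_integrable {α : ℝ} (hα0 : 0 < α) (hα2 : α < 2) (z : ℝ) :
    IntegrableOn (fun t => (1 - Real.cos (z*t)) * t ^ (-1-α)) (Ioi (0:ℝ)) := by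
  have hmeas : AEStronglyMeasurable (fun t : ℝ => (1 - Real.cos (z*t)) * t ^ (-1-α)) (volume : Measure ℝ) := (kernel_meas z).aestronglyMeasurable
  have h1 : IntegrableOn (fun t => (1 - Real.cos (z*t)) * t ^ (-1-α)) (Ioc (0:ℝ) 1) := by
    have hb : IntegrableOn (fun t : ℝ => (z^2/2) * t ^ (1-α)) (Ioc (0:ℝ) 1) := by
      refine Integrable.const_mul ?_ _
      have := (intervalIntegral.integrableOn_Ioo_rpow_iff (s := 1-α) one_pos).2 (by linarith)
      exact this.congr_set_ae Ioo_ae_eq_Ioc.symm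
    refine Integrable.mono' hb hmeas.restrict ?_
    refine (ae_restrict_iff' measurableSet_Ioc).2 (.of_forall fun t ht => ?_)
    have ht0 : 0 < t := ht.1
    have hcos : 1 - Real.cos (z*t) ≤ (z*t)^2/2 := by
      have := Real.one_sub_sq_div_two_le_cos (x := z*t); linarith
    have hcos0 : 0 ≤ 1 - Real.cos (z*t) := by
      have := Real.cos_le_one (z*t); linarith
    have hrp : (0:ℝ) ≤ t ^ (-1-α) := Real.rpow_nonneg ht0.le _
    rw [Real.norm_eq_abs, abs_of_nonneg (mul_nonneg hcos0 hrp)]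
    have : (z*t)^2/2 * t ^ (-1-α) = z^2/2 * t ^ (1-α) := by
      rw [mul_pow]
      have : (t:ℝ)^2 * t ^ (-1-α) = t ^ (1-α) := by
        rw [← Real.rpow_natCast t 2, ← Real.rpow_add ht0]; norm_num; ring_nf
      calc (z^2 * t^2)/2 * t^(-1-α) = z^2/2 * (t^2 * t^(-1-α)) := by ring
        _ = z^2/2 * t^(1-α) := by rw [this]
    calc (1 - Real.cos (z*t)) * t ^ (-1-α) ≤ (z*t)^2/2 * t ^ (-1-α) :=
          mul_le_mul_of_nonneg_right hcos hrp
      _ = z^2/2 * t ^ (1-α) := this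
  have h2 : IntegrableOn (fun t => (1 - Real.cos (z*t)) * t ^ (-1-α)) (Ioi (1:ℝ)) := by
    have hb : IntegrableOn (fun t : ℝ => 2 * t ^ (-1-α)) (Ioi (1:ℝ)) :=
      (integrableOn_Ioi_rpow_of_lt (by linarith) one_pos).const_mul 2
    refine Integrable.mono' hb hmeas.restrict ?_
    refine (ae_restrict_iff' measurableSet_Ioi).2 (.of_forall fun t ht => ?_)
    have ht0 : (0:ℝ) < t := lt_trans one_pos ht
    have hcos0 : 0 ≤ 1 - Real.cos (z*t) := by have := Real.cos_le_one (z*t); linarith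
    have hcos2 : 1 - Real.cos (z*t) ≤ 2 := by have := Real.neg_one_le_cos (z*t); linarith
    have hrp : (0:ℝ) ≤ t ^ (-1-α) := Real.rpow_nonneg ht0.le _
    rw [Real.norm_eq_abs, abs_of_nonneg (mul_nonneg hcos0 hrp)]
    exact mul_le_mul_of_nonneg_right hcos2 hrp
  have := h1.union h2
  rwa [Ioc_union_Ioi_eq_Ioi one_pos.le] at this

lemma kernel_scale {α : ℝ} (hα0 : 0 < α) (z : ℝ) :
    ∫ t in Ioi (0:ℝ), (1 - Real.cos (z*t)) * t ^ (-1-α) =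
      |z| ^ α * ∫ t in Ioi (0:ℝ), (1 - Real.cos t) * t ^ (-1-α) := by
  rcases eq_or_ne z 0 with rfl | hz
  · simp [Real.zero_rpow hα0.ne']
  · set b := |z| with hbdef
    have hb : 0 < b := abs_pos.2 hz
    have key : ∀ t ∈ Ioi (0:ℝ), (1 - Real.cos (z*t)) * t ^ (-1-α) =
        b ^ (1+α) * ((1 - Real.cos (t*b)) * (t*b) ^ (-1-α)) := by
      intro t ht
      have ht0 : (0:ℝ) < t := ht
      have hcos : Real.cos (z*t) = Real.cos (t*b) := by
        rw [← Real.cos_abs (z*t), ← Real.cos_abs (t*b), abs_mul, abs_mul,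
          abs_of_pos ht0, abs_abs, mul_comm]
      have hrw : ((t*b) : ℝ) ^ (-1-α) = t ^ (-1-α) * b ^ (-1-α) :=
        Real.mul_rpow ht0.le hb.le
      rw [hcos, hrw]
      have hbb : b ^ (1+α) * b ^ (-1-α) = 1 := by
        rw [← Real.rpow_add hb]; norm_num
      calc (1 - Real.cos (t*b)) * t ^ (-1-α)
          = (b ^ (1+α) * b ^ (-1-α)) * ((1 - Real.cos (t*b)) * t ^ (-1-α)) := by
            rw [hbb, one_mul]
        _ = b ^ (1+α) * ((1 - Real.cos (t*b)) * (t ^ (-1-α) * b ^ (-1-α))) := by ring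
    rw [setIntegral_congr_fun measurableSet_Ioi key, integral_const_mul]
    have hsub := integral_comp_mul_right_Ioi
      (fun s => (1 - Real.cos s) * s ^ (-1-α)) 0 hb
    simp only [zero_mul] at hsub
    rw [hsub, smul_eq_mul]
    rw [← mul_assoc, ← Real.rpow_neg_one b, ← Real.rpow_add hb]
    congr 1
    rw [hbdef]
    congr 1
    ring

lemma kernel_nonneg {α : ℝ} (z : ℝ) :
    ∀ t ∈ Ioi (0:ℝ), 0 ≤ (1 - Real.cos (z*t)) * t ^ (-1-α) := fun t ht =>
  mul_nonneg (by have := Real.cos_le_one (z*t); linarith)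
    (Real.rpow_nonneg (le_of_lt ht) _)

lemma c_pos {α : ℝ} (hα0 : 0 < α) (hα2 : α < 2) :
    0 < ∫ t in Ioi (0:ℝ), (1 - Real.cos t) * t ^ (-1-α) := by
  have hnn : 0 ≤ᵐ[volume.restrict (Ioi (0:ℝ))]
      fun t => (1 - Real.cos t) * t ^ (-1-α) :=
    (ae_restrict_iff' measurableSet_Ioi).2 (.of_forall fun t ht => by
      simpa using kernel_nonneg (α := α) 1 t ht)
  have hint : IntegrableOn (fun t => (1 - Real.cos t) * t ^ (-1-α)) (Ioi (0:ℝ)) := by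
    simpa using kernel_integrable hα0 hα2 1
  rw [setIntegral_pos_iff_support_of_nonneg_ae hnn hint]
  have hsub : Ioi 0 \ {t : ℝ | Real.cos t = 1} ⊆
      Function.support (fun t => (1 - Real.cos t) * t ^ (-1-α)) ∩ Ioi 0 := by
    rintro t ⟨ht, hct⟩
    refine ⟨?_, ht⟩
    have h1 : 0 < 1 - Real.cos t := by
      rcases lt_or_eq_of_le (Real.cos_le_one t) with h | h
      · linarith
      · exact absurd h hct
    exact ne_of_gt (mul_pos h1 (Real.rpow_pos_of_pos ht _))
  have hcnt : ({t : ℝ | Real.cos t = 1} : Set ℝ).Countable := by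
    have : {t : ℝ | Real.cos t = 1} ⊆ Set.range (fun n : ℤ => (n : ℝ) * (2 * Real.pi)) := by
      intro t ht
      obtain ⟨n, hn⟩ := Real.cos_eq_one_iff t |>.1 ht
      exact ⟨n, hn⟩
    exact (Set.countable_range _).mono this
  have h0 : volume (Ioi (0:ℝ) \ {t : ℝ | Real.cos t = 1}) = ⊤ := by
    rw [measure_diff_null (hcnt.measure_zero volume)]
    simp
  have h2 := measure_mono (μ := (volume : Measure ℝ)) hsub
  rw [h0] at h2
  exact lt_of_lt_of_le (by simp) h2

lemma cos_expectation_key {Ω : Type*} [MeasurableSpace Ω] (μ : Measure Ω) [IsProbabilityMeasure μ]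
    (X Y : Ω → ℝ) (hX : Measurable X) (hY : Measurable Y)
    (hindep : IndepFun X Y μ) (hid : IdentDistrib X Y μ μ) (t : ℝ) :
    ∫ ω, (1 - Real.cos ((X ω - Y ω) * t)) ∂μ ≤ ∫ ω, (1 - Real.cos ((X ω + Y ω) * t)) ∂μ := by
  have hbd : ∀ (f : Ω → ℝ), Measurable f → (∀ ω, |f ω| ≤ 1) → Integrable f μ := fun f hf hb =>
    Integrable.mono' (integrable_const 1) hf.aestronglyMeasurable
      (Filter.Eventually.of_forall fun ω => by simpa using hb ω)
  have iC1 : Integrable (fun ω => Real.cos ((X ω - Y ω) * t)) μ :=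
    hbd _ (by fun_prop) (fun ω => Real.abs_cos_le_one _)
  have iC2 : Integrable (fun ω => Real.cos ((X ω + Y ω) * t)) μ :=
    hbd _ (by fun_prop) (fun ω => Real.abs_cos_le_one _)
  have iSX : Integrable (fun ω => Real.sin (X ω * t)) μ :=
    hbd _ (by fun_prop) (fun ω => Real.abs_sin_le_one _)
  have iSY : Integrable (fun ω => Real.sin (Y ω * t)) μ :=
    hbd _ (by fun_prop) (fun ω => Real.abs_sin_le_one _)
  have hms : Measurable (fun x : ℝ => Real.sin (x * t)) := by fun_prop
  have hi : IndepFun (fun ω => Real.sin (X ω * t)) (fun ω => Real.sin (Y ω * t)) μ :=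
    hindep.comp hms hms
  have hmul : ∫ ω, Real.sin (X ω * t) * Real.sin (Y ω * t) ∂μ =
      (∫ ω, Real.sin (X ω * t) ∂μ) * ∫ ω, Real.sin (Y ω * t) ∂μ :=
    hi.integral_mul_eq_mul_integral iSX.aestronglyMeasurable iSY.aestronglyMeasurable
  have hYX : ∫ ω, Real.sin (X ω * t) ∂μ = ∫ ω, Real.sin (Y ω * t) ∂μ :=
    (hid.comp hms).integral_eq
  have h1 : ∫ ω, (Real.cos ((X ω - Y ω) * t) - Real.cos ((X ω + Y ω) * t)) ∂μ =
      2 * ((∫ ω, Real.sin (X ω * t) ∂μ) * ∫ ω, Real.sin (Y ω * t) ∂μ) := by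
    have hfun : (fun ω => Real.cos ((X ω - Y ω) * t) - Real.cos ((X ω + Y ω) * t)) =
        fun ω => 2 * (Real.sin (X ω * t) * Real.sin (Y ω * t)) := by
      funext ω
      have e1 : (X ω - Y ω) * t = X ω * t - Y ω * t := by ring
      have e2 : (X ω + Y ω) * t = X ω * t + Y ω * t := by ring
      rw [e1, e2, Real.cos_sub, Real.cos_add]
      ring
    rw [hfun, integral_const_mul, hmul]
  have h2 : (∫ ω, Real.cos ((X ω - Y ω) * t) ∂μ) - ∫ ω, Real.cos ((X ω + Y ω) * t) ∂μ =
      2 * ((∫ ω, Real.sin (X ω * t) ∂μ) * ∫ ω, Real.sin (Y ω * t) ∂μ) := by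
    rw [← integral_sub iC1 iC2]; exact h1
  have hnn : 0 ≤ (∫ ω, Real.sin (X ω * t) ∂μ) * ∫ ω, Real.sin (Y ω * t) ∂μ := by
    rw [← hYX]; exact mul_self_nonneg _
  rw [integral_sub (integrable_const 1) iC1, integral_sub (integrable_const 1) iC2]
  linarith

lemma kernel_rep {α : ℝ} (hα0 : 0 < α) (hα2 : α < 2) (z : ℝ) :
    ∫⁻ t in Ioi (0:ℝ), ENNReal.ofReal ((1 - Real.cos (z*t)) * t ^ (-1-α)) =
      ENNReal.ofReal (|z| ^ α) *
        ENNReal.ofReal (∫ t in Ioi (0:ℝ), (1 - Real.cos t) * t ^ (-1-α)) := by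
  rw [← ofReal_integral_eq_lintegral_ofReal (kernel_integrable hα0 hα2 z)
    ((ae_restrict_iff' measurableSet_Ioi).2 (.of_forall (kernel_nonneg z))),
    kernel_scale hα0 z, ENNReal.ofReal_mul (Real.rpow_nonneg (abs_nonneg z) α)]

lemma rpow_abs_add_le {α : ℝ} (hα0 : 0 < α) (x y : ℝ) :
    |x + y| ^ α ≤ 2 ^ α * (|x| ^ α + |y| ^ α) := by
  have h1 : |x + y| ≤ 2 * max |x| |y| := by
    refine (abs_add_le x y).trans ?_
    rcases le_total |x| |y| with h | h
    · rw [max_eq_right h]; linarith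
    · rw [max_eq_left h]; linarith
  have h2 : |x + y| ^ α ≤ (2 * max |x| |y|) ^ α :=
    Real.rpow_le_rpow (abs_nonneg _) h1 hα0.le
  have h3 : (2 * max |x| |y|) ^ α = 2 ^ α * (max |x| |y|) ^ α :=
    Real.mul_rpow (by norm_num) (le_max_of_le_left (abs_nonneg x))
  have h4 : (max |x| |y|) ^ α ≤ |x| ^ α + |y| ^ α := by
    rcases max_cases |x| |y| with ⟨h, _⟩ | ⟨h, _⟩ <;> rw [h]
    · exact le_add_of_nonneg_right (Real.rpow_nonneg (abs_nonneg y) α)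
    · exact le_add_of_nonneg_left (Real.rpow_nonneg (abs_nonneg x) α)
  calc |x + y| ^ α ≤ 2 ^ α * (max |x| |y|) ^ α := h3 ▸ h2
    _ ≤ 2 ^ α * (|x| ^ α + |y| ^ α) :=
        mul_le_mul_of_nonneg_left h4 (Real.rpow_nonneg (by norm_num) α)


end Aux

/-- Let `α ∈ (0,2]` and let `X, Y` be i.i.d. real random variables with
`E|X|^α < ∞`. Then `E|X−Y|^α ≤ E|X+Y|^α`. -/
theorem abs_diff_rpow_expectation_le_abs_add_rpow_expectation
    {Ω : Type*} [MeasurableSpace Ω] (μ : Measure Ω) [IsProbabilityMeasure μ]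
    (X Y : Ω → ℝ) (hX : Measurable X) (hY : Measurable Y)
    (hindep : IndepFun X Y μ) (hid : IdentDistrib X Y μ μ)
    (α : ℝ) (hα0 : 0 < α) (hα2 : α ≤ 2)
    (hmom : Integrable (fun ω => |X ω| ^ α) μ) :
    ∫ ω, |X ω - Y ω| ^ α ∂μ ≤ ∫ ω, |X ω + Y ω| ^ α ∂μ := by
  have hmabs : Measurable (fun x : ℝ => |x| ^ α) := by fun_prop
  have hmY : Integrable (fun ω => |Y ω| ^ α) μ := ((hid.comp hmabs).integrable_iff).1 hmom
  have hintS : Integrable (fun ω => |X ω + Y ω| ^ α) μ := by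
    refine Integrable.mono' ((hmom.add hmY).const_mul (2 ^ α))
      ((hmabs.comp (hX.add hY)).aestronglyMeasurable) (.of_forall fun ω => ?_)
    rw [Real.norm_eq_abs, abs_of_nonneg (Real.rpow_nonneg (abs_nonneg _) _)]
    exact rpow_abs_add_le hα0 _ _
  have hintD : Integrable (fun ω => |X ω - Y ω| ^ α) μ := by
    refine Integrable.mono' ((hmom.add hmY).const_mul (2 ^ α))
      ((hmabs.comp (hX.sub hY)).aestronglyMeasurable) (.of_forall fun ω => ?_)
    rw [Real.norm_eq_abs, abs_of_nonneg (Real.rpow_nonneg (abs_nonneg _) _)]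
    have := rpow_abs_add_le hα0 (X ω) (-Y ω)
    rwa [← sub_eq_add_neg, abs_neg] at this
  rcases lt_or_eq_of_le hα2 with hlt | heq
  · -- main case α < 2
    set c := ∫ t in Ioi (0:ℝ), (1 - Real.cos t) * t ^ (-1-α) with hcdef
    have hcpos : 0 < c := c_pos hα0 hlt
    rw [integral_eq_lintegral_of_nonneg_ae (f := fun ω => |X ω - Y ω| ^ α)
        (.of_forall fun ω => Real.rpow_nonneg (abs_nonneg _) _)
        ((hmabs.comp (hX.sub hY)).aestronglyMeasurable),
      integral_eq_lintegral_of_nonneg_ae (f := fun ω => |X ω + Y ω| ^ α)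
        (.of_forall fun ω => Real.rpow_nonneg (abs_nonneg _) _)
        ((hmabs.comp (hX.add hY)).aestronglyMeasurable)]
    apply ENNReal.toReal_mono
    · rw [← ofReal_integral_eq_lintegral_ofReal hintS
        (.of_forall fun ω => Real.rpow_nonneg (abs_nonneg _) _)]
      exact ENNReal.ofReal_ne_top
    · have hc0 : ENNReal.ofReal c ≠ 0 := by
        simp only [ne_eq, ENNReal.ofReal_eq_zero, not_le]; exact hcpos
      rw [← ENNReal.mul_le_mul_iff_left hc0 ENNReal.ofReal_ne_top]
      have measD : Measurable fun ω => ENNReal.ofReal (|X ω - Y ω| ^ α) :=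
        (hmabs.comp (hX.sub hY)).ennreal_ofReal
      have measS : Measurable fun ω => ENNReal.ofReal (|X ω + Y ω| ^ α) :=
        (hmabs.comp (hX.add hY)).ennreal_ofReal
      have hprodD : Measurable (Function.uncurry fun (ω : Ω) (t : ℝ) =>
          ENNReal.ofReal ((1 - Real.cos ((X ω - Y ω) * t)) * t ^ (-1-α))) := by
        apply Measurable.ennreal_ofReal; fun_prop
      have hprodS : Measurable (Function.uncurry fun (ω : Ω) (t : ℝ) =>
          ENNReal.ofReal ((1 - Real.cos ((X ω + Y ω) * t)) * t ^ (-1-α))) := by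
        apply Measurable.ennreal_ofReal; fun_prop
      have eqD : (∫⁻ ω, ENNReal.ofReal (|X ω - Y ω| ^ α) ∂μ) * ENNReal.ofReal c =
          ∫⁻ t in Ioi (0:ℝ), ∫⁻ ω,
            ENNReal.ofReal ((1 - Real.cos ((X ω - Y ω) * t)) * t ^ (-1-α)) ∂μ := by
        rw [← lintegral_mul_const _ measD,
          lintegral_congr (fun ω => (kernel_rep hα0 hlt (X ω - Y ω)).symm)]
        exact lintegral_lintegral_swap hprodD.aemeasurable
      have eqS : (∫⁻ ω, ENNReal.ofReal (|X ω + Y ω| ^ α) ∂μ) * ENNReal.ofReal c =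
          ∫⁻ t in Ioi (0:ℝ), ∫⁻ ω,
            ENNReal.ofReal ((1 - Real.cos ((X ω + Y ω) * t)) * t ^ (-1-α)) ∂μ := by
        rw [← lintegral_mul_const _ measS,
          lintegral_congr (fun ω => (kernel_rep hα0 hlt (X ω + Y ω)).symm)]
        exact lintegral_lintegral_swap hprodS.aemeasurable
      rw [eqD, eqS]
      refine lintegral_mono_ae ((ae_restrict_iff' measurableSet_Ioi).2
        (.of_forall fun t ht => ?_))
      have ht0 : (0:ℝ) < t := ht
      have hk : (0:ℝ) ≤ t ^ (-1-α) := Real.rpow_nonneg ht0.le _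
      have ibd : ∀ (Z : Ω → ℝ), Measurable Z →
          Integrable (fun ω => (1 - Real.cos (Z ω * t)) * t ^ (-1-α)) μ := by
        intro Z hZ
        refine Integrable.mono' (integrable_const (2 * t ^ (-1-α)))
          ((by fun_prop : Measurable fun ω => (1 - Real.cos (Z ω * t)) * t ^ (-1-α)).aestronglyMeasurable)
          (.of_forall fun ω => ?_)
        rw [Real.norm_eq_abs, abs_of_nonneg (mul_nonneg
          (by have := Real.cos_le_one (Z ω * t); linarith) hk)]
        exact mul_le_mul_of_nonneg_right
          (by have := Real.neg_one_le_cos (Z ω * t); linarith) hk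
      rw [← ofReal_integral_eq_lintegral_ofReal (ibd (fun ω => X ω - Y ω) (hX.sub hY))
          (.of_forall fun ω => mul_nonneg
            (by have := Real.cos_le_one ((X ω - Y ω) * t); linarith) hk),
        ← ofReal_integral_eq_lintegral_ofReal (ibd (fun ω => X ω + Y ω) (hX.add hY))
          (.of_forall fun ω => mul_nonneg
            (by have := Real.cos_le_one ((X ω + Y ω) * t); linarith) hk)]
      apply ENNReal.ofReal_le_ofReal
      rw [integral_mul_const, integral_mul_const]
      exact mul_le_mul_of_nonneg_right
        (cos_expectation_key μ X Y hX hY hindep hid t) hk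
  · -- case α = 2
    subst heq
    have h2 : ∀ x : ℝ, |x| ^ (2:ℝ) = x ^ 2 := fun x => by
      rw [show (2:ℝ) = ((2:ℕ):ℝ) by norm_num, Real.rpow_natCast, sq_abs]
    simp only [h2] at hmom hmY hintS hintD ⊢
    have hX1 : Integrable X μ := by
      refine Integrable.mono' (hmom.add (integrable_const 1))
        hX.aestronglyMeasurable (.of_forall fun ω => ?_)
      simp only [Real.norm_eq_abs, Pi.add_apply]
      nlinarith [sq_abs (X ω), sq_nonneg (|X ω| - 1)]
    have hY1 : Integrable Y μ := by
      refine Integrable.mono' (hmY.add (integrable_const 1))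
        hY.aestronglyMeasurable (.of_forall fun ω => ?_)
      simp only [Real.norm_eq_abs, Pi.add_apply]
      nlinarith [sq_abs (Y ω), sq_nonneg (|Y ω| - 1)]
    have hXY : Integrable (fun ω => X ω * Y ω) μ := hindep.integrable_mul hX1 hY1
    have hmulXY : ∫ ω, X ω * Y ω ∂μ = (∫ ω, X ω ∂μ) * ∫ ω, Y ω ∂μ :=
      hindep.integral_mul_eq_mul_integral hX1.aestronglyMeasurable hY1.aestronglyMeasurable
    have hEq : ∫ ω, (X ω + Y ω) ^ 2 ∂μ =
        (∫ ω, (X ω - Y ω) ^ 2 ∂μ) + 4 * ∫ ω, X ω * Y ω ∂μ := by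
      rw [← integral_const_mul, ← integral_add hintD (hXY.const_mul 4)]
      congr 1; funext ω; ring
    have hXXYY : ∫ ω, X ω ∂μ = ∫ ω, Y ω ∂μ := hid.integral_eq
    have : 0 ≤ ∫ ω, X ω * Y ω ∂μ := by rw [hmulXY, ← hXXYY]; exact mul_self_nonneg _
    linarith
end

section
/- Let X and Y be independent, identically distributed real-valued random variables with E|X| < ∞. Then E|X + Y| − E|X − Y| = 2 ∫₀^∞ [P(X > r) − P(X < −r)]² dr. In particular, E|X − Y| ≤ E|X + Y|. -/
open MeasureTheory ProbabilityTheory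

noncomputable def gaux (s r : ℝ) : ℝ :=
  (if r < s then 1 else 0) - (if r < -s then 1 else 0)

lemma gaux_abs_le_one (s r : ℝ) : |gaux s r| ≤ 1 := by
  unfold gaux; split_ifs <;> norm_num

lemma gaux_abs_le (s r : ℝ) : |gaux s r| ≤ if r < |s| then 1 else 0 := by
  unfold gaux
  by_cases h1 : r < s <;> by_cases h2 : r < -s <;> by_cases h3 : r < |s| <;>
    simp [h1, h2, h3] <;> linarith [le_abs_self s, neg_le_abs s]

lemma gaux_mul_abs_le (s t r : ℝ) :
    |gaux s r * gaux t r| ≤ if r < |s| then 1 else 0 := by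
  rw [abs_mul]
  calc |gaux s r| * |gaux t r| ≤ (if r < |s| then 1 else 0) * 1 :=
        mul_le_mul (gaux_abs_le s r) (gaux_abs_le_one t r) (abs_nonneg _)
          (by split_ifs <;> norm_num)
    _ = _ := mul_one _

lemma gaux_mul (s t r : ℝ) :
    gaux s r * gaux t r =
      (if r < min s t then (1:ℝ) else 0) - (if r < min s (-t) then 1 else 0)
      - (if r < min (-s) t then 1 else 0) + (if r < min (-s) (-t) then 1 else 0) := by
  unfold gaux
  by_cases h1 : r < s <;> by_cases h2 : r < -s <;> by_cases h3 : r < t <;>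
    by_cases h4 : r < -t <;> simp [lt_min_iff, h1, h2, h3, h4]

lemma intble_if (m : ℝ) :
    Integrable (fun r => if r < m then (1:ℝ) else 0) (volume.restrict (Set.Ioi 0)) := by
  have h : (fun r : ℝ => if r < m then (1:ℝ) else 0)
      = (Set.Iio m).indicator (fun _ => (1:ℝ)) := by
    ext r; simp [Set.indicator_apply]
  rw [h, integrable_indicator_iff measurableSet_Iio]
  refine integrableOn_const (ne_of_lt ?_) (by simp)
  rw [Measure.restrict_apply measurableSet_Iio, Set.Iio_inter_Ioi, Real.volume_Ioo]
  exact ENNReal.ofReal_lt_top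

lemma integ_if (m : ℝ) :
    ∫ r in Set.Ioi (0:ℝ), (if r < m then (1:ℝ) else 0) = max m 0 := by
  have h : (fun r : ℝ => if r < m then (1:ℝ) else 0)
      = (Set.Iio m).indicator (fun _ => (1:ℝ)) := by
    ext r; simp [Set.indicator_apply]
  rw [h, setIntegral_indicator measurableSet_Iio, setIntegral_const, smul_eq_mul,
    mul_one, Set.Ioi_inter_Iio, measureReal_def, Real.volume_Ioo, ENNReal.toReal_ofReal', sub_zero]

set_option maxHeartbeats 1000000 in
lemma abs_arith (s t : ℝ) :
    |s + t| - |s - t|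
      = 2 * (max (min s t) 0 - max (min s (-t)) 0 - max (min (-s) t) 0
        + max (min (-s) (-t)) 0) := by
  rcases abs_cases (s + t) with ⟨h1, h1'⟩ | ⟨h1, h1'⟩ <;>
    rcases abs_cases (s - t) with ⟨h2, h2'⟩ | ⟨h2, h2'⟩ <;>
    rcases le_total s t with h3 | h3 <;>
    rcases le_total s (-t) with h4 | h4 <;>
    simp only [min_eq_left, min_eq_right, h3, h4, neg_le_neg h3, neg_le_neg h4,
      min_def, max_def] <;>
    split_ifs <;> linarith

lemma key (s t : ℝ) :
    |s + t| - |s - t| = 2 * ∫ r in Set.Ioi (0:ℝ), gaux s r * gaux t r := by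
  have hf2 : Integrable (fun r : ℝ =>
      ((if r < min s t then (1:ℝ) else 0) - if r < min s (-t) then 1 else 0))
      (volume.restrict (Set.Ioi 0)) := (intble_if _).sub (intble_if _)
  have hf1 : Integrable (fun r : ℝ =>
      (((if r < min s t then (1:ℝ) else 0) - if r < min s (-t) then 1 else 0)
        - if r < min (-s) t then 1 else 0))
      (volume.restrict (Set.Ioi 0)) := hf2.sub (intble_if _)
  have hI : ∫ r in Set.Ioi (0:ℝ), gaux s r * gaux t r
      = max (min s t) 0 - max (min s (-t)) 0 - max (min (-s) t) 0
        + max (min (-s) (-t)) 0 := by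
    simp_rw [gaux_mul]
    rw [integral_add hf1 (intble_if _), integral_sub hf2 (intble_if _),
      integral_sub (intble_if _) (intble_if _), integ_if, integ_if, integ_if, integ_if]
  rw [hI, abs_arith]

lemma gaux_meas_right (r : ℝ) : Measurable (fun s => gaux s r) := by
  unfold gaux
  have h1 : Measurable (fun s : ℝ => if r < s then (1:ℝ) else 0) := by
    have : {s : ℝ | r < s} = Set.Ioi r := rfl
    exact Measurable.ite (this ▸ measurableSet_Ioi) measurable_const measurable_const
  have h2 : Measurable (fun s : ℝ => if r < -s then (1:ℝ) else 0) := by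
    have : {s : ℝ | r < -s} = Set.Iio (-r) := by ext x; simp [lt_neg]
    exact Measurable.ite (this ▸ measurableSet_Iio) measurable_const measurable_const
  exact h1.sub h2

lemma gaux_meas : Measurable (fun p : ℝ × ℝ => gaux p.1 p.2) := by
  unfold gaux
  have h1 : Measurable (fun p : ℝ × ℝ => if p.2 < p.1 then (1:ℝ) else 0) :=
    Measurable.ite (measurableSet_lt measurable_snd measurable_fst)
      measurable_const measurable_const
  have h2 : Measurable (fun p : ℝ × ℝ => if p.2 < -p.1 then (1:ℝ) else 0) :=
    Measurable.ite (measurableSet_lt measurable_snd measurable_fst.neg)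
      measurable_const measurable_const
  exact h1.sub h2

lemma integ_gaux {Ω : Type*} [MeasurableSpace Ω] (μ : Measure Ω) [IsProbabilityMeasure μ]
    (Z : Ω → ℝ) (hZ : Measurable Z) (r : ℝ) :
    ∫ ω, gaux (Z ω) r ∂μ = (μ {ω | r < Z ω}).toReal - (μ {ω | Z ω < -r}).toReal := by
  have hs1 : MeasurableSet {ω | r < Z ω} := hZ measurableSet_Ioi
  have hs2 : MeasurableSet {ω | Z ω < -r} := hZ measurableSet_Iio
  have e1 : (fun ω => (if r < Z ω then (1:ℝ) else 0))
      = {ω | r < Z ω}.indicator (fun _ => (1:ℝ)) := by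
    ext ω; simp [Set.indicator_apply]
  have e2 : (fun ω => (if r < -Z ω then (1:ℝ) else 0))
      = {ω | Z ω < -r}.indicator (fun _ => (1:ℝ)) := by
    ext ω; simp [Set.indicator_apply, lt_neg]
  have i1 : Integrable (fun ω => (if r < Z ω then (1:ℝ) else 0)) μ := by
    rw [e1]; exact (integrable_const (1:ℝ)).indicator hs1
  have i2 : Integrable (fun ω => (if r < -Z ω then (1:ℝ) else 0)) μ := by
    rw [e2]; exact (integrable_const (1:ℝ)).indicator hs2
  unfold gaux
  rw [integral_sub i1 i2, e1, e2, integral_indicator_const _ hs1,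
    integral_indicator_const _ hs2, smul_eq_mul, smul_eq_mul, mul_one, mul_one,
    measureReal_def, measureReal_def]

/-- For i.i.d. integrable real random variables `X, Y`,
`E|X+Y| − E|X−Y| = 2 ∫₀^∞ (P(X > r) − P(X < −r))² dr`;
in particular `E|X−Y| ≤ E|X+Y|`. -/
theorem expectation_abs_add_sub_expectation_abs_sub_eq
    {Ω : Type*} [MeasurableSpace Ω] (μ : Measure Ω) [IsProbabilityMeasure μ]
    (X Y : Ω → ℝ) (hX : Measurable X) (hY : Measurable Y)
    (hindep : IndepFun X Y μ) (hid : IdentDistrib X Y μ μ)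
    (hint : Integrable X μ) :
    (∫ ω, |X ω + Y ω| ∂μ) - ∫ ω, |X ω - Y ω| ∂μ
      = 2 * ∫ r in Set.Ioi (0 : ℝ),
          ((μ {ω | r < X ω}).toReal - (μ {ω | X ω < -r}).toReal) ^ 2
    ∧ ∫ ω, |X ω - Y ω| ∂μ ≤ ∫ ω, |X ω + Y ω| ∂μ := by
  have hYint : Integrable Y μ := hid.integrable_iff.mp hint
  have hadd : Integrable (fun ω => |X ω + Y ω|) μ := (hint.add hYint).abs
  have hsub : Integrable (fun ω => |X ω - Y ω|) μ := (hint.sub hYint).abs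
  set ν := volume.restrict (Set.Ioi (0:ℝ)) with hν
  -- measurability of the kernel
  have hFmeas : Measurable (fun p : Ω × ℝ => gaux (X p.1) p.2 * gaux (Y p.1) p.2) := by
    have m1 : Measurable (fun p : Ω × ℝ => gaux (X p.1) p.2) :=
      gaux_meas.comp ((hX.comp measurable_fst).prodMk measurable_snd)
    have m2 : Measurable (fun p : Ω × ℝ => gaux (Y p.1) p.2) :=
      gaux_meas.comp ((hY.comp measurable_fst).prodMk measurable_snd)
    exact m1.mul m2
  -- the dominating indicator
  have hA : MeasurableSet {p : Ω × ℝ | p.2 < |X p.1|} :=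
    measurableSet_lt measurable_snd ((hX.comp measurable_fst).abs)
  have hAfin : (μ.prod ν) {p : Ω × ℝ | p.2 < |X p.1|} < ⊤ := by
    rw [Measure.prod_apply hA]
    have heq : ∀ ω, ν (Prod.mk ω ⁻¹' {p : Ω × ℝ | p.2 < |X p.1|})
        = ENNReal.ofReal |X ω| := by
      intro ω
      have : Prod.mk ω ⁻¹' {p : Ω × ℝ | p.2 < |X p.1|} = Set.Iio |X ω| := rfl
      rw [this, hν, Measure.restrict_apply measurableSet_Iio, Set.Iio_inter_Ioi,
        Real.volume_Ioo, sub_zero]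
    calc ∫⁻ ω, ν (Prod.mk ω ⁻¹' {p : Ω × ℝ | p.2 < |X p.1|}) ∂μ
        = ∫⁻ ω, ENNReal.ofReal |X ω| ∂μ := by simp_rw [heq]
      _ = ∫⁻ ω, ‖X ω‖ₑ ∂μ := by
          congr 1; ext ω; rw [Real.enorm_eq_ofReal_abs]
      _ < ⊤ := hint.2
  have hGint : Integrable ({p : Ω × ℝ | p.2 < |X p.1|}.indicator fun _ => (1:ℝ))
      (μ.prod ν) := by
    rw [integrable_indicator_iff hA]
    exact integrableOn_const (ne_of_lt hAfin) (by simp)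
  have hFint : Integrable (fun p : Ω × ℝ => gaux (X p.1) p.2 * gaux (Y p.1) p.2)
      (μ.prod ν) := by
    refine hGint.mono' hFmeas.aestronglyMeasurable (ae_of_all _ fun p => ?_)
    rw [Real.norm_eq_abs]
    refine (gaux_mul_abs_le _ _ _).trans ?_
    by_cases h : p.2 < |X p.1| <;> simp [Set.indicator_apply, h, Set.mem_setOf_eq]
  -- innermost integral via independence
  have hinner : ∀ r : ℝ, ∫ ω, gaux (X ω) r * gaux (Y ω) r ∂μ
      = ((μ {ω | r < X ω}).toReal - (μ {ω | X ω < -r}).toReal) ^ 2 := by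
    intro r
    have hind : IndepFun (fun ω => gaux (X ω) r) (fun ω => gaux (Y ω) r) μ :=
      hindep.comp (gaux_meas_right r) (gaux_meas_right r)
    have := hind.integral_mul_eq_mul_integral
      ((gaux_meas_right r).comp hX).aestronglyMeasurable
      ((gaux_meas_right r).comp hY).aestronglyMeasurable
    rw [show (fun ω => gaux (X ω) r * gaux (Y ω) r) = ((fun ω => gaux (X ω) r) * fun ω => gaux (Y ω) r) from rfl, this, integ_gaux μ X hX, integ_gaux μ Y hY]
    have e1 : μ {ω | r < Y ω} = μ {ω | r < X ω} :=
      (hid.measure_mem_eq measurableSet_Ioi).symm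
    have e2 : μ {ω | Y ω < -r} = μ {ω | X ω < -r} :=
      (hid.measure_mem_eq measurableSet_Iio).symm
    rw [e1, e2]; ring
  -- main computation
  have hmain : (∫ ω, |X ω + Y ω| ∂μ) - ∫ ω, |X ω - Y ω| ∂μ
      = 2 * ∫ r in Set.Ioi (0 : ℝ),
          ((μ {ω | r < X ω}).toReal - (μ {ω | X ω < -r}).toReal) ^ 2 := by
    calc (∫ ω, |X ω + Y ω| ∂μ) - ∫ ω, |X ω - Y ω| ∂μ
        = ∫ ω, (|X ω + Y ω| - |X ω - Y ω|) ∂μ := (integral_sub hadd hsub).symm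
      _ = ∫ ω, 2 * ∫ r in Set.Ioi (0:ℝ), gaux (X ω) r * gaux (Y ω) r ∂(volume) ∂μ := by
          congr 1; ext ω; exact key (X ω) (Y ω)
      _ = 2 * ∫ ω, ∫ r, gaux (X ω) r * gaux (Y ω) r ∂ν ∂μ := integral_const_mul 2 _
      _ = 2 * ∫ r, ∫ ω, gaux (X ω) r * gaux (Y ω) r ∂μ ∂ν := by
          rw [integral_integral_swap hFint]
      _ = 2 * ∫ r in Set.Ioi (0 : ℝ),
          ((μ {ω | r < X ω}).toReal - (μ {ω | X ω < -r}).toReal) ^ 2 := by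
          rw [hν]; congr 1; exact integral_congr_ae (ae_of_all _ fun r => hinner r)
  refine ⟨hmain, ?_⟩
  have hnn : 0 ≤ ∫ r in Set.Ioi (0 : ℝ),
      ((μ {ω | r < X ω}).toReal - (μ {ω | X ω < -r}).toReal) ^ 2 :=
    integral_nonneg fun r => sq_nonneg _
  linarith
end

section
/- Let α ∈ (0,2]. For every natural number n, all real numbers u₁, …, u_n, and all real coefficients c₁, …, c_n, one has Σ_{i=1}^{n} Σ_{j=1}^{n} c_i c_j (|u_i + u_j|^α − |u_i − u_j|^α) ≥ 0. That is, the kernel K(u,v) = |u+v|^α − |u−v|^α on ℝ × ℝ is positive semidefinite. -/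
open MeasureTheory Real Set

namespace KernelPSD

lemma contOn (α a : ℝ) :
    ContinuousOn (fun t : ℝ => (1 - Real.cos (a * t)) * t ^ (-1 - α)) (Ioi 0) := by
  apply ContinuousOn.mul
  · exact (continuous_const.sub
      (Real.continuous_cos.comp (continuous_const.mul continuous_id))).continuousOn
  · intro t ht
    exact (Real.continuousAt_rpow_const t _ (Or.inl (ne_of_gt ht))).continuousWithinAt

lemma integrableOn_aux {α : ℝ} (hα0 : 0 < α) (hα2 : α < 2) (a : ℝ) :
    IntegrableOn (fun t : ℝ => (1 - Real.cos (a * t)) * t ^ (-1 - α)) (Ioi 0) := by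
  have hsplit : Ioc (0:ℝ) 1 ∪ Ioi 1 = Ioi 0 := Ioc_union_Ioi_eq_Ioi zero_le_one
  rw [← hsplit]
  apply IntegrableOn.union
  · have hbound : IntegrableOn (fun t : ℝ => a ^ 2 / 2 * t ^ (1 - α)) (Ioc 0 1) :=
      ((intervalIntegrable_iff_integrableOn_Ioc_of_le zero_le_one).mp
        (intervalIntegral.intervalIntegrable_rpow' (by linarith))).const_mul _
    refine Integrable.mono' hbound
      (((contOn α a).mono Ioc_subset_Ioi_self).aestronglyMeasurable measurableSet_Ioc) ?_
    filter_upwards [ae_restrict_mem measurableSet_Ioc] with t ht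
    have ht0 : 0 < t := ht.1
    have h1 : 0 ≤ 1 - Real.cos (a * t) := by linarith [Real.cos_le_one (a * t)]
    have h2 : 1 - Real.cos (a * t) ≤ (a * t) ^ 2 / 2 := by
      linarith [Real.one_sub_sq_div_two_le_cos (x := a * t)]
    rw [Real.norm_eq_abs, abs_mul, abs_of_nonneg h1,
      abs_of_nonneg (Real.rpow_nonneg ht0.le _)]
    have h3 : t ^ 2 * t ^ (-1 - α) = t ^ (1 - α) := by
      rw [← Real.rpow_two, ← Real.rpow_add ht0]; ring_nf
    calc (1 - Real.cos (a * t)) * t ^ (-1 - α)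
        ≤ (a * t) ^ 2 / 2 * t ^ (-1 - α) :=
          mul_le_mul_of_nonneg_right h2 (Real.rpow_nonneg ht0.le _)
      _ = a ^ 2 / 2 * (t ^ 2 * t ^ (-1 - α)) := by ring
      _ = a ^ 2 / 2 * t ^ (1 - α) := by rw [h3]
  · have hbound : IntegrableOn (fun t : ℝ => 2 * t ^ (-1 - α)) (Ioi 1) :=
      (integrableOn_Ioi_rpow_of_lt (by linarith) one_pos).const_mul 2
    refine Integrable.mono' hbound
      (((contOn α a).mono (Ioi_subset_Ioi zero_le_one)).aestronglyMeasurable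
        measurableSet_Ioi) ?_
    filter_upwards [ae_restrict_mem measurableSet_Ioi] with t ht
    have ht0 : (0:ℝ) < t := lt_trans one_pos ht
    have h1 : 0 ≤ 1 - Real.cos (a * t) := by linarith [Real.cos_le_one (a * t)]
    have h2 : 1 - Real.cos (a * t) ≤ 2 := by linarith [Real.neg_one_le_cos (a * t)]
    rw [Real.norm_eq_abs, abs_mul, abs_of_nonneg h1,
      abs_of_nonneg (Real.rpow_nonneg ht0.le _)]
    exact mul_le_mul_of_nonneg_right h2 (Real.rpow_nonneg ht0.le _)

lemma integral_scale {α : ℝ} (hα0 : 0 < α) (a : ℝ) :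
    ∫ t in Ioi (0:ℝ), (1 - Real.cos (a * t)) * t ^ (-1 - α) =
      |a| ^ α * ∫ t in Ioi (0:ℝ), (1 - Real.cos t) * t ^ (-1 - α) := by
  rcases eq_or_ne a 0 with rfl | ha
  · simp [Real.zero_rpow (ne_of_gt hα0)]
  · have hb0 : 0 < |a| := abs_pos.2 ha
    have hcos : ∀ t : ℝ, Real.cos (a * t) = Real.cos (|a| * t) := by
      intro t; rcases abs_choice a with h | h
      · rw [h]
      · rw [h, neg_mul, Real.cos_neg]
    have hpow : |a| ^ (1 + α) * |a| ^ (-1 - α) = 1 := by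
      rw [← Real.rpow_add hb0]; norm_num
    have key : ∀ t ∈ Ioi (0:ℝ), (1 - Real.cos (a * t)) * t ^ (-1 - α) =
        |a| ^ (1 + α) * ((1 - Real.cos (|a| * t)) * (|a| * t) ^ (-1 - α)) := by
      intro t ht
      rw [Real.mul_rpow hb0.le (le_of_lt ht), hcos]
      calc (1 - Real.cos (|a| * t)) * t ^ (-1 - α)
          = (|a| ^ (1 + α) * |a| ^ (-1 - α)) * ((1 - Real.cos (|a| * t)) * t ^ (-1 - α)) := by
            rw [hpow, one_mul]
        _ = |a| ^ (1 + α) * ((1 - Real.cos (|a| * t)) * (|a| ^ (-1 - α) * t ^ (-1 - α))) := by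
            ring
    calc ∫ t in Ioi (0:ℝ), (1 - Real.cos (a * t)) * t ^ (-1 - α)
        = ∫ t in Ioi (0:ℝ),
            |a| ^ (1 + α) * ((1 - Real.cos (|a| * t)) * (|a| * t) ^ (-1 - α)) :=
          setIntegral_congr_fun measurableSet_Ioi key
      _ = |a| ^ (1 + α) * ∫ t in Ioi (0:ℝ),
            (1 - Real.cos (|a| * t)) * (|a| * t) ^ (-1 - α) := integral_const_mul _ _
      _ = |a| ^ (1 + α) *
            (|a|⁻¹ * ∫ s in Ioi (0:ℝ), (1 - Real.cos s) * s ^ (-1 - α)) := by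
          rw [integral_comp_mul_left_Ioi (fun s => (1 - Real.cos s) * s ^ (-1 - α)) 0 hb0]
          rw [mul_zero, smul_eq_mul]
      _ = |a| ^ α * ∫ s in Ioi (0:ℝ), (1 - Real.cos s) * s ^ (-1 - α) := by
          rw [← mul_assoc]
          congr 1
          rw [← Real.rpow_neg_one |a|, ← Real.rpow_add hb0]
          norm_num

lemma I_pos {α : ℝ} (hα0 : 0 < α) (hα2 : α < 2) :
    0 < ∫ t in Ioi (0:ℝ), (1 - Real.cos t) * t ^ (-1 - α) := by
  have hint := integrableOn_aux hα0 hα2 1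
  simp only [one_mul] at hint
  rw [setIntegral_pos_iff_support_of_nonneg_ae ?nn hint]
  case nn =>
    filter_upwards [ae_restrict_mem measurableSet_Ioi] with t ht
    exact mul_nonneg (by linarith [Real.cos_le_one t]) (Real.rpow_nonneg (le_of_lt ht) _)
  refine lt_of_lt_of_le ?_ (measure_mono (?_ : Ioo (1:ℝ) 2 ⊆ _))
  · rw [Real.volume_Ioo]; norm_num
  · intro t ht
    have ht0 : (0:ℝ) < t := lt_trans one_pos ht.1
    have htpi : t ≤ π := le_trans ht.2.le Real.two_le_pi
    have hcos : Real.cos t < 1 := by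
      have := Real.cos_lt_cos_of_nonneg_of_le_pi le_rfl htpi ht0
      rwa [Real.cos_zero] at this
    refine ⟨?_, ht0⟩
    exact ne_of_gt (mul_pos (by linarith) (Real.rpow_pos_of_pos ht0 _))

end KernelPSD

/-- For `α ∈ (0,2]`, the kernel `K(u,v) = |u+v|^α − |u−v|^α` on `ℝ × ℝ`
is positive semidefinite: for all points `u₁,…,u_n` and weights `c₁,…,c_n`,
`Σᵢ Σⱼ cᵢ cⱼ (|uᵢ+uⱼ|^α − |uᵢ−uⱼ|^α) ≥ 0`. -/
theorem kernel_abs_add_rpow_sub_abs_sub_rpow_posSemidef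
    (α : ℝ) (hα0 : 0 < α) (hα2 : α ≤ 2)
    (n : ℕ) (u : Fin n → ℝ) (c : Fin n → ℝ) :
    0 ≤ ∑ i : Fin n, ∑ j : Fin n,
      c i * c j * (|u i + u j| ^ α - |u i - u j| ^ α) := by
  rcases lt_or_eq_of_le hα2 with hlt | heq
  · -- case α < 2 : use the subordination formula
    set I := ∫ t in Ioi (0:ℝ), (1 - Real.cos t) * t ^ (-1 - α) with hIdef
    have hIpos : 0 < I := KernelPSD.I_pos hα0 hlt
    have hint := fun a => KernelPSD.integrableOn_aux hα0 hlt a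
    have hpair : ∀ a b : ℝ, (|a + b| ^ α - |a - b| ^ α) * I =
        ∫ t in Ioi (0:ℝ),
          ((1 - Real.cos ((a + b) * t)) - (1 - Real.cos ((a - b) * t))) * t ^ (-1 - α) := by
      intro a b
      have heq : (fun t : ℝ =>
          ((1 - Real.cos ((a + b) * t)) - (1 - Real.cos ((a - b) * t))) * t ^ (-1 - α))
          = fun t : ℝ => (1 - Real.cos ((a + b) * t)) * t ^ (-1 - α)
              - (1 - Real.cos ((a - b) * t)) * t ^ (-1 - α) := by
        funext t; ring
      rw [heq, integral_sub (hint _) (hint _),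
        KernelPSD.integral_scale hα0 (a + b), KernelPSD.integral_scale hα0 (a - b)]
      ring
    have hintpair : ∀ i j : Fin n, Integrable (fun t : ℝ => c i * c j *
        (((1 - Real.cos ((u i + u j) * t)) - (1 - Real.cos ((u i - u j) * t)))
          * t ^ (-1 - α))) (volume.restrict (Ioi 0)) := by
      intro i j
      have := (((hint (u i + u j)).sub (hint (u i - u j))).const_mul (c i * c j))
      exact this.congr (Filter.Eventually.of_forall fun t => by simp only [Pi.sub_apply]; ring)
    have hsum : (∑ i : Fin n, ∑ j : Fin n,
          c i * c j * (|u i + u j| ^ α - |u i - u j| ^ α)) * I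
        = ∫ t in Ioi (0:ℝ), ∑ i : Fin n, ∑ j : Fin n, c i * c j *
            (((1 - Real.cos ((u i + u j) * t)) - (1 - Real.cos ((u i - u j) * t)))
              * t ^ (-1 - α)) := by
      rw [MeasureTheory.integral_finset_sum Finset.univ
        (fun i _ => MeasureTheory.integrable_finset_sum Finset.univ
          (fun j _ => hintpair i j))]
      rw [Finset.sum_mul]
      refine Finset.sum_congr rfl fun i _ => ?_
      rw [MeasureTheory.integral_finset_sum Finset.univ (fun j _ => hintpair i j),
        Finset.sum_mul]
      refine Finset.sum_congr rfl fun j _ => ?_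
      rw [mul_assoc, hpair (u i) (u j), ← integral_const_mul]
    have hnonneg : 0 ≤ (∑ i : Fin n, ∑ j : Fin n,
        c i * c j * (|u i + u j| ^ α - |u i - u j| ^ α)) * I := by
      rw [hsum]
      apply setIntegral_nonneg measurableSet_Ioi
      intro t ht
      have hterm : ∀ i j : Fin n,
          ((1 - Real.cos ((u i + u j) * t)) - (1 - Real.cos ((u i - u j) * t)))
            = 2 * (Real.sin (u i * t) * Real.sin (u j * t)) := by
        intro i j
        rw [add_mul, sub_mul, Real.cos_add, Real.cos_sub]; ring
      have hptw : ∑ i : Fin n, ∑ j : Fin n, c i * c j *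
          (((1 - Real.cos ((u i + u j) * t)) - (1 - Real.cos ((u i - u j) * t)))
            * t ^ (-1 - α))
          = 2 * (∑ i : Fin n, c i * Real.sin (u i * t)) ^ 2 * t ^ (-1 - α) := by
        simp only [hterm]
        rw [sq, Finset.sum_mul_sum]
        simp only [Finset.sum_mul, Finset.mul_sum]
        refine Finset.sum_congr rfl fun i _ => Finset.sum_congr rfl fun j _ => by ring
      rw [hptw]
      exact mul_nonneg (mul_nonneg (by norm_num) (sq_nonneg _))
        (Real.rpow_nonneg (le_of_lt ht) _)
    nlinarith [hnonneg, hIpos]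
  · -- case α = 2
    subst heq
    have habs : ∀ x : ℝ, |x| ^ (2:ℝ) = x ^ 2 := fun x => by
      rw [Real.rpow_two, sq_abs]
    simp only [habs]
    have key : ∀ i j : Fin n,
        c i * c j * ((u i + u j) ^ 2 - (u i - u j) ^ 2)
          = 4 * ((c i * u i) * (c j * u j)) := fun i j => by ring
    simp only [key]
    have hs : ∑ i : Fin n, ∑ j : Fin n, (4:ℝ) * ((c i * u i) * (c j * u j))
        = 4 * ((∑ i : Fin n, c i * u i) * (∑ j : Fin n, c j * u j)) := by
      rw [Finset.sum_mul_sum]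
      rw [Finset.mul_sum]
      refine Finset.sum_congr rfl fun i _ => ?_
      rw [Finset.mul_sum]
    rw [hs]
    nlinarith [sq_nonneg (∑ i : Fin n, c i * u i)]
end

section
/- Let X and Y be independent, identically distributed, essentially bounded real-valued random variables. Set M = sup{r : P(X < r) < 1} (the essential supremum of X) and m = sup{r : P(X < r) = 0} (the essential infimum of X). Then the essential supremum of |X − Y| equals M − m, the essential supremum of |X + Y| equals 2·max{|M|, |m|}, and consequently ess sup |X − Y| ≤ ess sup |X + Y|. -/
open MeasureTheory ProbabilityTheory

open scoped ENNReal NNReal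

lemma aux_lower {Ω : Type*} [MeasurableSpace Ω] (μ : Measure Ω) (f : Ω → ℝ) (t : ℝ)
    (h : ∀ ε > 0, μ {ω | t - ε < |f ω|} ≠ 0) :
    ENNReal.ofReal t ≤ eLpNorm f ⊤ μ := by
  by_contra h'
  push_neg at h'
  have hne : eLpNorm f ⊤ μ ≠ ⊤ := (h'.trans ENNReal.ofReal_lt_top).ne
  set c := (eLpNorm f ⊤ μ).toReal with hc
  have hct : c < t := by
    rcases le_or_gt t 0 with ht | ht
    · exact absurd h' (by simp [ENNReal.ofReal_eq_zero.mpr ht])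
    · exact (ENNReal.lt_ofReal_iff_toReal_lt hne).mp h'
  have hae : ∀ᵐ ω ∂μ, |f ω| ≤ c := by
    have h1 : ∀ᵐ ω ∂μ, (‖f ω‖₊ : ℝ≥0∞) ≤ eLpNorm f ⊤ μ := by
      rw [eLpNorm_exponent_top]; exact ae_le_eLpNormEssSup
    filter_upwards [h1] with ω hω
    simpa [Real.norm_eq_abs, hc] using ENNReal.toReal_mono hne hω
  have h0 : μ {ω | c < |f ω|} = 0 := by
    have := ae_iff.mp hae
    simpa only [not_le] using this
  have h2 := h (t - c) (by linarith)
  rw [sub_sub_cancel] at h2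
  exact h2 h0

/-- For i.i.d. essentially bounded real random variables `X, Y`, with
`M = sup{r : P(X < r) < 1}` and `m = sup{r : P(X < r) = 0}`, one has
`‖X − Y‖_∞ = M − m`, `‖X + Y‖_∞ = 2 max{|M|,|m|}`, and hence
`‖X − Y‖_∞ ≤ ‖X + Y‖_∞`. -/
theorem eLpNormTop_sub_le_eLpNormTop_add
    {Ω : Type*} [MeasurableSpace Ω] (μ : Measure Ω) [IsProbabilityMeasure μ]
    (X Y : Ω → ℝ) (hX : Measurable X) (hY : Measurable Y)
    (hindep : IndepFun X Y μ) (hid : IdentDistrib X Y μ μ)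
    (hbddX : MemLp X ⊤ μ) (hbddY : MemLp Y ⊤ μ)
    (M m : ℝ)
    (hM : M = sSup {r : ℝ | μ {ω | X ω < r} < 1})
    (hm : m = sSup {r : ℝ | μ {ω | X ω < r} = 0}) :
    eLpNorm (fun ω => X ω - Y ω) ⊤ μ = ENNReal.ofReal (M - m)
    ∧ eLpNorm (fun ω => X ω + Y ω) ⊤ μ = ENNReal.ofReal (2 * max |M| |m|)
    ∧ eLpNorm (fun ω => X ω - Y ω) ⊤ μ ≤ eLpNorm (fun ω => X ω + Y ω) ⊤ μ := by
  -- essential bound on X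
  have hXtop : eLpNorm X ⊤ μ ≠ ⊤ := hbddX.2.ne
  set C := (eLpNorm X ⊤ μ).toReal with hCdef
  have hCae : ∀ᵐ ω ∂μ, |X ω| ≤ C := by
    have h1 : ∀ᵐ ω ∂μ, (‖X ω‖₊ : ℝ≥0∞) ≤ eLpNorm X ⊤ μ := by
      rw [eLpNorm_exponent_top]; exact ae_le_eLpNormEssSup
    filter_upwards [h1] with ω hω
    simpa [Real.norm_eq_abs, hCdef] using ENNReal.toReal_mono hXtop hω
  have hmeaslt : ∀ r : ℝ, MeasurableSet {ω | X ω < r} := fun r => hX measurableSet_Iio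
  have hlow : μ {ω | X ω < -C} = 0 := by
    have h1 : ∀ᵐ ω ∂μ, ¬ (X ω < -C) :=
      hCae.mono fun ω hω => not_lt.mpr (by linarith [(abs_le.mp hω).1])
    have h2 := ae_iff.mp h1
    simpa only [not_not] using h2
  have hhigh : ∀ r : ℝ, C < r → μ {ω | X ω < r} = 1 := by
    intro r hr
    rw [← prob_compl_eq_zero_iff (hmeaslt r)]
    have h1 : ∀ᵐ ω ∂μ, X ω < r := hCae.mono fun ω hω => by linarith [(abs_le.mp hω).2]
    have h2 := ae_iff.mp h1
    simpa [Set.compl_setOf] using h2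
  -- the set S for M
  have hSne : Set.Nonempty {r : ℝ | μ {ω | X ω < r} < 1} :=
    ⟨-C, by simp only [Set.mem_setOf_eq, hlow]; exact zero_lt_one⟩
  have hSbdd : ∀ r ∈ {r : ℝ | μ {ω | X ω < r} < 1}, r ≤ C := by
    intro r hr
    by_contra hrC
    push_neg at hrC
    rw [Set.mem_setOf_eq, hhigh r hrC] at hr
    exact lt_irrefl _ hr
  -- the set T for m
  have hTne : Set.Nonempty {r : ℝ | μ {ω | X ω < r} = 0} := ⟨-C, hlow⟩
  have hTbdd : ∀ r ∈ {r : ℝ | μ {ω | X ω < r} = 0}, r ≤ C := by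
    intro r hr
    by_contra hrC
    push_neg at hrC
    rw [Set.mem_setOf_eq, hhigh r hrC] at hr
    exact one_ne_zero hr
  -- X ≤ M a.e.
  have hfull : ∀ r : ℝ, M < r → μ {ω | ¬ (X ω < r)} = 0 := by
    intro r hr
    have hrS : r ∉ {r : ℝ | μ {ω | X ω < r} < 1} := by
      intro hmem
      have := le_csSup ⟨C, fun x hx => hSbdd x hx⟩ hmem
      rw [← hM] at this
      linarith
    have h1 : μ {ω | X ω < r} = 1 :=
      le_antisymm prob_le_one (not_lt.mp hrS)
    have : {ω | ¬ (X ω < r)} = {ω | X ω < r}ᶜ := by ext ω; simp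
    rw [this, prob_compl_eq_zero_iff (hmeaslt r)]
    exact h1
  have hXleM : ∀ᵐ ω ∂μ, X ω ≤ M := by
    rw [ae_iff]
    simp only [not_le]
    refine measure_mono_null (t := ⋃ n : ℕ, {ω | ¬ (X ω < M + 1/(n+1))}) ?_ ?_
    · intro ω hω
      simp only [Set.mem_setOf_eq] at hω
      obtain ⟨n, hn⟩ := exists_nat_one_div_lt (sub_pos.mpr hω)
      exact Set.mem_iUnion.mpr ⟨n, not_lt.mpr (by push_cast; push_cast at hn; linarith)⟩
    · refine measure_iUnion_null fun n => hfull _ ?_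
      have : (0:ℝ) < 1/(n+1) := by positivity
      linarith
  have hMnear : ∀ ε : ℝ, 0 < ε → μ {ω | M - ε < X ω} ≠ 0 := by
    intro ε hε h0
    obtain ⟨r, hrS, hrgt⟩ := exists_lt_of_lt_csSup hSne (show M - ε < _ by rw [← hM]; linarith)
    have hsub : {ω | X ω < r}ᶜ ⊆ {ω | M - ε < X ω} := by
      intro ω hω
      simp only [Set.mem_compl_iff, Set.mem_setOf_eq, not_lt] at hω ⊢
      linarith
    have := measure_mono_null hsub h0
    rw [prob_compl_eq_zero_iff (hmeaslt r)] at this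
    rw [Set.mem_setOf_eq, this] at hrS
    exact lt_irrefl _ hrS
  -- m ≤ X a.e.
  have hmleX : ∀ᵐ ω ∂μ, m ≤ X ω := by
    rw [ae_iff]
    simp only [not_le]
    refine measure_mono_null (t := ⋃ n : ℕ, {ω | X ω < m - 1/(n+1)}) ?_ ?_
    · intro ω hω
      simp only [Set.mem_setOf_eq] at hω
      obtain ⟨n, hn⟩ := exists_nat_one_div_lt (sub_pos.mpr hω)
      exact Set.mem_iUnion.mpr ⟨n, by simp only [Set.mem_setOf_eq]; push_cast; push_cast at hn; linarith⟩
    · refine measure_iUnion_null fun n => ?_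
      have h1 : m - 1/(n+1:ℝ) < sSup {r : ℝ | μ {ω | X ω < r} = 0} := by
        rw [← hm]
        have : (0:ℝ) < 1/(n+1) := by positivity
        linarith
      obtain ⟨r, hrT, hrgt⟩ := exists_lt_of_lt_csSup hTne h1
      exact measure_mono_null (fun ω hω => by
        simp only [Set.mem_setOf_eq] at hω ⊢; linarith) hrT
  have hmnear : ∀ ε : ℝ, 0 < ε → μ {ω | X ω < m + ε} ≠ 0 := by
    intro ε hε h0
    have h1 : m + ε ≤ sSup {r : ℝ | μ {ω | X ω < r} = 0} :=
      le_csSup ⟨C, fun x hx => hTbdd x hx⟩ h0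
    rw [← hm] at h1
    linarith
  -- transfer to Y
  have hYeq : ∀ s : Set ℝ, MeasurableSet s → μ {ω | Y ω ∈ s} = μ {ω | X ω ∈ s} :=
    fun s hs => (hid.measure_mem_eq hs).symm
  have hYleM : ∀ᵐ ω ∂μ, Y ω ≤ M := by
    rw [ae_iff]
    simp only [not_le]
    have h1 : μ {ω | Y ω ∈ Set.Ioi M} = μ {ω | X ω ∈ Set.Ioi M} := hYeq _ measurableSet_Ioi
    have h2 : μ {ω | X ω ∈ Set.Ioi M} = 0 := by
      have := ae_iff.mp hXleM
      simpa only [not_le, Set.mem_Ioi] using this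
    simpa [Set.mem_Ioi] using h1.trans h2
  have hmleY : ∀ᵐ ω ∂μ, m ≤ Y ω := by
    rw [ae_iff]
    simp only [not_le]
    have h1 : μ {ω | Y ω ∈ Set.Iio m} = μ {ω | X ω ∈ Set.Iio m} := hYeq _ measurableSet_Iio
    have h2 : μ {ω | X ω ∈ Set.Iio m} = 0 := by
      have := ae_iff.mp hmleX
      simpa only [not_le, Set.mem_Iio] using this
    simpa [Set.mem_Iio] using h1.trans h2
  have hMnearY : ∀ ε : ℝ, 0 < ε → μ {ω | M - ε < Y ω} ≠ 0 := by
    intro ε hε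
    have h1 : μ {ω | Y ω ∈ Set.Ioi (M - ε)} = μ {ω | X ω ∈ Set.Ioi (M - ε)} :=
      hYeq _ measurableSet_Ioi
    simpa [Set.mem_Ioi] using h1 ▸ hMnear ε hε
  have hmnearY : ∀ ε : ℝ, 0 < ε → μ {ω | Y ω < m + ε} ≠ 0 := by
    intro ε hε
    have h1 : μ {ω | Y ω ∈ Set.Iio (m + ε)} = μ {ω | X ω ∈ Set.Iio (m + ε)} :=
      hYeq _ measurableSet_Iio
    simpa [Set.mem_Iio] using h1 ▸ hmnear ε hε
  -- m ≤ M
  have hmM : m ≤ M := by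
    obtain ⟨ω, h1, h2⟩ := (hmleX.and hXleM).exists
    linarith
  -- max rewriting
  have hK : max |M| |m| = max M (-m) := by
    have h1 : M ≤ max M (-m) := le_max_left _ _
    have h2 : -m ≤ max M (-m) := le_max_right _ _
    apply le_antisymm
    · exact max_le (abs_le.mpr ⟨by linarith, h1⟩) (abs_le.mpr ⟨by linarith, by linarith⟩)
    · exact max_le ((le_abs_self M).trans (le_max_left _ _))
        ((neg_le_abs m).trans (le_max_right _ _))
  have hprod := hindep.measure_inter_preimage_eq_mul
  -- equation 1
  have e1 : eLpNorm (fun ω => X ω - Y ω) ⊤ μ = ENNReal.ofReal (M - m) := by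
    apply le_antisymm
    · rw [eLpNorm_exponent_top]
      apply eLpNormEssSup_le_of_ae_bound (C := M - m)
      filter_upwards [hXleM, hYleM, hmleX, hmleY] with ω h1 h2 h3 h4
      rw [Real.norm_eq_abs, abs_le]
      constructor <;> linarith
    · apply aux_lower
      intro ε hε
      have hA : μ (X ⁻¹' Set.Ioi (M - ε/2) ∩ Y ⁻¹' Set.Iio (m + ε/2)) ≠ 0 := by
        rw [hprod _ _ measurableSet_Ioi measurableSet_Iio]
        exact mul_ne_zero (hMnear (ε/2) (by linarith)) (hmnearY (ε/2) (by linarith))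
      intro h0
      apply hA
      apply measure_mono_null _ h0
      rintro ω ⟨h1, h2⟩
      simp only [Set.mem_preimage, Set.mem_Ioi, Set.mem_Iio] at h1 h2
      simp only [Set.mem_setOf_eq]
      calc M - m - ε < X ω - Y ω := by linarith
        _ ≤ |X ω - Y ω| := le_abs_self _
  -- equation 2
  have e2 : eLpNorm (fun ω => X ω + Y ω) ⊤ μ = ENNReal.ofReal (2 * max |M| |m|) := by
    apply le_antisymm
    · rw [eLpNorm_exponent_top]
      apply eLpNormEssSup_le_of_ae_bound (C := 2 * max |M| |m|)
      filter_upwards [hXleM, hYleM, hmleX, hmleY] with ω h1 h2 h3 h4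
      rw [Real.norm_eq_abs, abs_le, hK]
      have hb1 : M ≤ max M (-m) := le_max_left _ _
      have hb2 : -m ≤ max M (-m) := le_max_right _ _
      constructor <;> linarith
    · apply aux_lower
      intro ε hε
      rw [hK]
      rcases max_cases M (-m) with ⟨hKeq, hge⟩ | ⟨hKeq, hlt⟩
      · rw [hKeq]
        have hA : μ (X ⁻¹' Set.Ioi (M - ε/2) ∩ Y ⁻¹' Set.Ioi (M - ε/2)) ≠ 0 := by
          rw [hprod _ _ measurableSet_Ioi measurableSet_Ioi]
          exact mul_ne_zero (hMnear (ε/2) (by linarith)) (hMnearY (ε/2) (by linarith))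
        intro h0
        apply hA
        apply measure_mono_null _ h0
        rintro ω ⟨h1, h2⟩
        simp only [Set.mem_preimage, Set.mem_Ioi] at h1 h2
        simp only [Set.mem_setOf_eq]
        calc 2 * M - ε < X ω + Y ω := by linarith
          _ ≤ |X ω + Y ω| := le_abs_self _
      · rw [hKeq]
        have hA : μ (X ⁻¹' Set.Iio (m + ε/2) ∩ Y ⁻¹' Set.Iio (m + ε/2)) ≠ 0 := by
          rw [hprod _ _ measurableSet_Iio measurableSet_Iio]
          exact mul_ne_zero (hmnear (ε/2) (by linarith)) (hmnearY (ε/2) (by linarith))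
        intro h0
        apply hA
        apply measure_mono_null _ h0
        rintro ω ⟨h1, h2⟩
        simp only [Set.mem_preimage, Set.mem_Iio] at h1 h2
        simp only [Set.mem_setOf_eq]
        calc 2 * (-m) - ε < -(X ω + Y ω) := by linarith
          _ ≤ |X ω + Y ω| := neg_le_abs _
  refine ⟨e1, e2, ?_⟩
  rw [e1, e2]
  apply ENNReal.ofReal_le_ofReal
  rw [hK]
  have hb1 : M ≤ max M (-m) := le_max_left _ _
  have hb2 : -m ≤ max M (-m) := le_max_right _ _
  linarith
end

section
/- For every real α ∈ (2, ∞) there exist independent, identically distributed real-valued random variables X and Y with E|X|^α < ∞ such that E|X − Y|^α > E|X + Y|^α. In particular, the inequality E|X−Y|^α ≤ E|X+Y|^α fails in general for α > 2. -/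
open MeasureTheory ProbabilityTheory Real
open scoped ENNReal

namespace ExpAbsRpowCE

variable {A B : Type*} [MeasurableSpace A] [MeasurableSpace B]

lemma smul_prod' (c : ℝ≥0∞) (μ : Measure A) (ν : Measure B) [SFinite μ] [SFinite ν] :
    (c • μ).prod ν = c • (μ.prod ν) := by
  ext s hs
  rw [Measure.prod_apply hs, Measure.smul_apply, Measure.prod_apply hs,
    lintegral_smul_measure, smul_eq_mul]

lemma prod_smul' (c : ℝ≥0∞) (hc : c ≠ ⊤) (μ : Measure A) (ν : Measure B)
    [SFinite μ] [SFinite ν] : μ.prod (c • ν) = c • (μ.prod ν) := by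
  ext s hs
  rw [Measure.prod_apply hs, Measure.smul_apply, Measure.prod_apply hs, smul_eq_mul,
    ← lintegral_const_mul' _ _ hc]
  simp [mul_comm]

lemma integrable_dirac'' [MeasurableSingletonClass A] (f : A → ℝ) (a : A) :
    Integrable f (Measure.dirac a) :=
  (integrable_const (f a)).congr (ae_eq_dirac f).symm

set_option maxHeartbeats 2000000 in
lemma key_numeric (α : ℝ) (hα : 2 < α) : ∃ M p q : ℝ, 0 < p ∧ 0 < q ∧ p + q = 1 ∧ 1 < M ∧
    p*p*(2:ℝ)^α + p*q*(M-1)^α + q*p*(M-1)^α + q*q*(2*M)^α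
      < p*q*(M+1)^α + q*p*(M+1)^α := by
  have hα0 : 0 < α := by linarith
  have hα1 : 1 ≤ α := by linarith
  set U : ℝ := (2:ℝ)^(-α) with hUdef
  have hU0 : 0 < U := rpow_pos_of_pos two_pos _
  set c : ℝ := α * U with hcU
  have hc0 : 0 < c := mul_pos hα0 hU0
  have hX0 : (0:ℝ) < (2:ℝ)^(2*α) / α^2 := div_pos (rpow_pos_of_pos two_pos _) (by positivity)
  set B : ℝ := ((2:ℝ)^(2*α) / α^2) ^ (1/(α-2)) with hBdef
  have hBpos : 0 < B := rpow_pos_of_pos hX0 _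
  set M : ℝ := max (max (4*α) (3*c+1)) (B+1) with hMdef
  have hM4 : 4*α ≤ M := le_trans (le_max_left _ _) (le_max_left _ _)
  have hM3c : 3*c+1 ≤ M := le_trans (le_max_right _ _) (le_max_left _ _)
  have hMB : B+1 ≤ M := le_max_right _ _
  have hM1 : 1 < M := by linarith
  have hM0 : 0 < M := by linarith
  have hMm1 : 0 < M - 1 := by linarith
  set q : ℝ := c / M with hqdef
  have hq0 : 0 < q := div_pos hc0 hM0
  have hq3 : q ≤ 1/3 := by rw [hqdef, div_le_iff₀ hM0]; linarith
  set p : ℝ := 1 - q with hpdef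
  have hp23 : 2/3 ≤ p := by rw [hpdef]; linarith
  have hp0 : 0 < p := by linarith
  have hp1 : p ≤ 1 := by linarith
  have hqM : q * M = c := by rw [hqdef]; field_simp
  set T : ℝ := (2:ℝ)^α with hTdef
  have hT0 : 0 < T := rpow_pos_of_pos two_pos _
  set X : ℝ := M^(α-2) with hXdef
  have hXpos : 0 < X := rpow_pos_of_pos hM0 _
  set S : ℝ := (M-1)^α with hSdef
  set L : ℝ := (M+1)^α with hLdef
  set W : ℝ := (M-1)^(α-1) with hWdef
  have hW0 : 0 ≤ W := rpow_nonneg hMm1.le _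
  have hUT : U * T = 1 := by
    rw [hUdef, hTdef, ← rpow_add two_pos]; simp
  refine ⟨M, p, q, hp0, hq0, by rw [hpdef]; ring, hM1, ?_⟩
  -- Step A : 2*α*W ≤ L - S
  have hA : S * (1 + α * (2/(M-1))) ≤ L := by
    have hfac : (M+1 : ℝ) = (M-1) * (1 + 2/(M-1)) := by field_simp; ring
    have hge : (-1:ℝ) ≤ 2/(M-1) := by
      have := div_nonneg (by norm_num : (0:ℝ) ≤ 2) hMm1.le; linarith
    have h1 : (1:ℝ) + α * (2/(M-1)) ≤ (1 + 2/(M-1))^α :=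
      one_add_mul_self_le_rpow_one_add hge hα1
    calc S * (1 + α*(2/(M-1))) ≤ S * (1 + 2/(M-1))^α := by
          exact mul_le_mul_of_nonneg_left h1 (rpow_nonneg hMm1.le α)
      _ = L := by rw [hSdef, hLdef, ← mul_rpow hMm1.le (by positivity), ← hfac]
  have hsub : 2*α*W ≤ L - S := by
    have h2 : W = S / (M-1) := by rw [hWdef, hSdef, rpow_sub_one hMm1.ne' α]
    have h3 : S * (α * (2/(M-1))) = 2*α*W := by rw [h2]; field_simp
    have h4 : S * (1 + α * (2/(M-1))) = S + S * (α * (2/(M-1))) := by ring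
    rw [h4, h3] at hA
    linarith
  -- Step B : (3/4) * (X * M) ≤ W
  have hαm1 : 1 ≤ α - 1 := by linarith
  have hMα1 : M^(α-1) = X * M := by
    rw [hXdef, show α-1 = α-2+1 by ring, rpow_add hM0, rpow_one]
  have hB2 : (3/4) * (X * M) ≤ W := by
    have hge : (-1:ℝ) ≤ -(1/M) := by
      have h1M : 1/M ≤ 1 := by rw [div_le_one hM0]; linarith
      linarith
    have h1 : (1:ℝ) + (α-1) * (-(1/M)) ≤ (1 + (-(1/M)))^(α-1) :=
      one_add_mul_self_le_rpow_one_add hge hαm1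
    have h3 : (3/4 : ℝ) ≤ 1 + (α-1)*(-(1/M)) := by
      have : (α-1)/M ≤ 1/4 := by rw [div_le_iff₀ hM0]; linarith
      have heq : 1 + (α-1)*(-(1/M)) = 1 - (α-1)/M := by ring
      rw [heq]; linarith
    have h1M0 : (0:ℝ) ≤ 1 + (-(1/M)) := by
      have h1M : 1/M ≤ 1 := by rw [div_le_one hM0]; linarith
      linarith
    calc (3/4) * (X * M) = (3/4) * M^(α-1) := by rw [hMα1]
      _ ≤ (1 + (α-1)*(-(1/M))) * M^(α-1) :=
          mul_le_mul_of_nonneg_right h3 (rpow_nonneg hM0.le _)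
      _ ≤ (1 + (-(1/M)))^(α-1) * M^(α-1) :=
          mul_le_mul_of_nonneg_right h1 (rpow_nonneg hM0.le _)
      _ = W := by
          rw [hWdef, ← mul_rpow h1M0 hM0.le]
          congr 1
          field_simp
          ring
  -- Step C : q*q*(2*M)^α = α*α*U*X
  have hMα : M^α = X*(M*M) := by
    rw [hXdef, show α = α-2+1+1 by ring, rpow_add hM0, rpow_add hM0, rpow_one]; ring
  have h2Mexp : (2*M)^α = T * (X*(M*M)) := by
    rw [mul_rpow (by norm_num : (0:ℝ) ≤ 2) hM0.le, ← hTdef, hMα]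
  have h_2M : q*q*(2*M)^α = α*α*U*X := by
    have e1 : q*q*(2*M)^α = c*c*(T*X) := by
      rw [h2Mexp, hqdef]; field_simp
    rw [e1]
    calc c*c*(T*X) = α*α*U*X*(U*T) := by rw [hcU]; ring
      _ = α*α*U*X := by rw [hUT, mul_one]
  -- Step D : T < α*α*U*X
  have hD : (2:ℝ)^(2*α)/α^2 < X := by
    have h1 : B < M := by linarith
    have h2 : ((2:ℝ)^(2*α)/α^2) = B^(α-2) := by
      rw [hBdef, ← rpow_mul hX0.le, one_div, inv_mul_cancel₀ (by linarith : α-(2:ℝ) ≠ 0),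
        rpow_one]
    rw [h2, hXdef]
    exact rpow_lt_rpow hBpos.le h1 (by linarith)
  have hTT : (2:ℝ)^(2*α) = T*T := by rw [hTdef, two_mul, rpow_add two_pos]
  have h_D : T < α*α*U*X := by
    rw [hTT, div_lt_iff₀ (by positivity : (0:ℝ) < α^2)] at hD
    have h1 : U*(T*T) < U*(X*α^2) := mul_lt_mul_of_pos_left hD hU0
    have h2 : U*(T*T) = T*(U*T) := by ring
    rw [h2, hUT, mul_one] at h1
    have h3 : U*(X*α^2) = α*α*U*X := by ring
    linarith
  -- Assemble
  clear_value U c B M q p T X S L W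
  have step1 : 2*(α*α*U)*X ≤ 3*α*p*c*X := by
    have h32 : (2:ℝ) ≤ 3*p := by linarith
    calc 2*(α*α*U)*X = 2*(α*c*X) := by rw [hcU]; ring
      _ ≤ (3*p)*(α*c*X) := mul_le_mul_of_nonneg_right h32 (mul_nonneg (mul_nonneg hα0.le hc0.le) hXpos.le)
      _ = 3*α*p*c*X := by ring
  have step2 : 3*α*p*c*X = 3*α*p*q*(X*M) := by rw [← hqM]; ring
  have step3 : 3*α*p*q*(X*M) ≤ 2*p*q*(2*α*W) := by
    have h4 := mul_le_mul_of_nonneg_left hB2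
      (by have := mul_pos (mul_pos hα0 hp0) hq0; linarith : (0:ℝ) ≤ 4*α*p*q)
    linarith [h4]
  have step4 : 2*p*q*(2*α*W) ≤ 2*p*q*(L-S) :=
    mul_le_mul_of_nonneg_left hsub (by have := mul_pos hp0 hq0; linarith : (0:ℝ) ≤ 2*p*q)
  have stepT : p*p*T ≤ T := by
    have hpp : p*p ≤ 1 := mul_le_one₀ hp1 hp0.le hp1
    have := mul_le_mul_of_nonneg_right hpp hT0.le
    linarith
  rw [h_2M, ← hSdef, ← hLdef]
  linarith [step1, step2, step3, step4, stepT, h_D, hSdef, hLdef]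

end ExpAbsRpowCE

open ExpAbsRpowCE

/-- For every real `α > 2` there exist i.i.d. real random variables `X, Y`
with `E|X|^α < ∞` such that `E|X − Y|^α > E|X + Y|^α`. -/
theorem exists_iid_expectation_abs_sub_rpow_gt (α : ℝ) (hα : 2 < α) :
    ∃ (Ω : Type) (_ : MeasurableSpace Ω) (μ : Measure Ω),
      IsProbabilityMeasure μ ∧
      ∃ X Y : Ω → ℝ, Measurable X ∧ Measurable Y ∧
        IndepFun X Y μ ∧ IdentDistrib X Y μ μ ∧
        Integrable (fun ω => |X ω| ^ α) μ ∧
        (∫ ω, |X ω + Y ω| ^ α ∂μ) < ∫ ω, |X ω - Y ω| ^ α ∂μ := by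
  obtain ⟨M, p, q, hp, hq, hpq, hM, hkey⟩ := key_numeric α hα
  set P : ℝ≥0∞ := ENNReal.ofReal p with hP
  set Q : ℝ≥0∞ := ENNReal.ofReal q with hQ
  have hPt : P ≠ ⊤ := ENNReal.ofReal_ne_top
  have hQt : Q ≠ ⊤ := ENNReal.ofReal_ne_top
  set ν : Measure ℝ := P • Measure.dirac 1 + Q • Measure.dirac (-M) with hν
  have hνprob : IsProbabilityMeasure ν := by
    constructor
    rw [hν]
    simp [← ENNReal.ofReal_add hp.le hq.le, hpq]
    rw [hP, hQ, ← ENNReal.ofReal_add hp.le hq.le, hpq, ENNReal.ofReal_one]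
  have hexp : ν.prod ν
      = P • (P • Measure.dirac ((1:ℝ),(1:ℝ)) + Q • Measure.dirac ((1:ℝ),-M))
        + Q • (P • Measure.dirac (-M,(1:ℝ)) + Q • Measure.dirac (-M,-M)) := by
    rw [hν, Measure.add_prod, smul_prod', smul_prod', Measure.prod_add,
      Measure.prod_add, prod_smul' _ hPt, prod_smul' _ hQt, prod_smul' _ hPt,
      prod_smul' _ hQt, Measure.dirac_prod_dirac, Measure.dirac_prod_dirac,
      Measure.dirac_prod_dirac, Measure.dirac_prod_dirac, smul_add, smul_add]
  have hint : ∀ f : ℝ × ℝ → ℝ, Integrable f (ν.prod ν) := by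
    intro f
    rw [hexp]
    exact ((((integrable_dirac'' f _).smul_measure hPt).add_measure
        ((integrable_dirac'' f _).smul_measure hQt)).smul_measure hPt).add_measure
      ((((integrable_dirac'' f _).smul_measure hPt).add_measure
        ((integrable_dirac'' f _).smul_measure hQt)).smul_measure hQt)
  have hPr : P.toReal = p := ENNReal.toReal_ofReal hp.le
  have hQr : Q.toReal = q := ENNReal.toReal_ofReal hq.le
  have hI : ∀ f : ℝ × ℝ → ℝ, ∫ z, f z ∂(ν.prod ν)
      = p*(p*f (1,1) + q*f (1,-M)) + q*(p*f (-M,1) + q*f (-M,-M)) := by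
    intro f
    rw [hexp, integral_add_measure
        ((((integrable_dirac'' f _).smul_measure hPt).add_measure
          ((integrable_dirac'' f _).smul_measure hQt)).smul_measure hPt)
        ((((integrable_dirac'' f _).smul_measure hPt).add_measure
          ((integrable_dirac'' f _).smul_measure hQt)).smul_measure hQt),
      integral_smul_measure, integral_smul_measure,
      integral_add_measure ((integrable_dirac'' f _).smul_measure hPt)
        ((integrable_dirac'' f _).smul_measure hQt),
      integral_add_measure ((integrable_dirac'' f _).smul_measure hPt)
        ((integrable_dirac'' f _).smul_measure hQt),
      integral_smul_measure, integral_smul_measure, integral_smul_measure,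
      integral_smul_measure, integral_dirac, integral_dirac, integral_dirac,
      integral_dirac, hPr, hQr]
    simp only [smul_eq_mul]
  refine ⟨ℝ × ℝ, inferInstance, ν.prod ν, inferInstance, Prod.fst, Prod.snd,
    measurable_fst, measurable_snd, ?_, ?_, ?_, ?_⟩
  · rw [indepFun_iff_map_prod_eq_prod_map_map measurable_fst.aemeasurable
      measurable_snd.aemeasurable]
    have h1 : (fun ω : ℝ × ℝ => (ω.1, ω.2)) = id := rfl
    rw [h1, Measure.map_id, Measure.map_fst_prod, Measure.map_snd_prod]
    simp
  · exact ⟨measurable_fst.aemeasurable, measurable_snd.aemeasurable, by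
      rw [Measure.map_fst_prod, Measure.map_snd_prod]⟩
  · exact hint _
  · rw [hI, hI]
    simp only
    have e2 : |(1:ℝ) + 1| = 2 := by norm_num
    have eM1 : |(1:ℝ) + -M| = M - 1 := by rw [abs_of_nonpos (by linarith)]; ring
    have eM2 : |-M + (1:ℝ)| = M - 1 := by rw [abs_of_nonpos (by linarith)]; ring
    have e2M : |-M + -M| = 2*M := by rw [abs_of_nonpos (by linarith)]; ring
    have s0 : |(1:ℝ) - 1| = 0 := by norm_num
    have sP : |(1:ℝ) - -M| = M + 1 := by rw [abs_of_nonneg (by linarith)]; ring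
    have sQ : |-M - (1:ℝ)| = M + 1 := by rw [abs_of_nonpos (by linarith)]; ring
    have sd : |-M - -M| = (0:ℝ) := by simp
    rw [e2, eM1, eM2, e2M, s0, sP, sQ, sd, Real.zero_rpow (by linarith : α ≠ 0)]
    nlinarith [hkey]
end

section
/- Fix α ∈ (2,∞) and c > 0, and for M ≥ max{c, 1} set q = c/M, p = 1 − q. Let X_M, Y_M be i.i.d. random variables with P(X_M = 1) = p and P(X_M = −M) = q. Then E|X_M − Y_M|^α − E|X_M + Y_M|^α = 2pq[(M+1)^α − (M−1)^α] − 2^α M^α q² − 2^α p² ≥ M^{α−2}(4pαc − 2^α c²) − 2^α p². In particular, if c < 2^{2−α}α, then for all sufficiently large M one has E|X_M − Y_M|^α > E|X_M + Y_M|^α. -/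
open MeasureTheory ProbabilityTheory

/-- The law of a random variable taking value `1` with probability `p`
and value `-M` with probability `q`. -/
noncomputable def twoPointLaw (p q M : ℝ) : Measure ℝ :=
  ENNReal.ofReal p • Measure.dirac (1 : ℝ) + ENNReal.ofReal q • Measure.dirac (-M)

open ENNReal intervalIntegral
open scoped ENNReal

lemma key_ineq {α M : ℝ} (hα : 2 < α) (hM : 1 ≤ M) :
    2 * α * M ^ (α - 1) ≤ (M + 1) ^ α - (M - 1) ^ α := by
  have hM0 : (0:ℝ) < M := by linarith
  have hr : (1:ℝ) ≤ α - 1 := by linarith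
  have hα0 : (0:ℝ) < α := by linarith
  have hMr : (0:ℝ) < M ^ (α - 1) := Real.rpow_pos_of_pos hM0 _
  have hm2 : M ^ (α - 2) = M ^ (α - 1) / M := by
    rw [show α - 2 = (α - 1) - 1 by ring, Real.rpow_sub_one hM0.ne']
  have hpt : ∀ t ∈ Set.Icc (M - 1) (M + 1),
      M ^ (α - 1) + (α - 1) * M ^ (α - 2) * (t - M) ≤ t ^ (α - 1) := by
    intro t ht
    have ht0 : 0 ≤ t := by linarith [ht.1]
    have hs : (-1:ℝ) ≤ t / M - 1 := by
      have : 0 ≤ t / M := div_nonneg ht0 hM0.le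
      linarith
    have hb := one_add_mul_self_le_rpow_one_add hs hr
    rw [show (1 + (t / M - 1)) = t / M by ring, Real.div_rpow ht0 hM0.le] at hb
    have hb' : (1 + (α - 1) * (t / M - 1)) * M ^ (α - 1) ≤ t ^ (α - 1) :=
      (le_div_iff₀ hMr).mp hb
    calc M ^ (α - 1) + (α - 1) * M ^ (α - 2) * (t - M)
        = (1 + (α - 1) * (t / M - 1)) * M ^ (α - 1) := by
          rw [hm2]; field_simp
      _ ≤ t ^ (α - 1) := hb'
  have hint1 : IntervalIntegrable (fun t : ℝ => t ^ (α - 1)) volume (M - 1) (M + 1) :=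
    intervalIntegral.intervalIntegrable_rpow (Or.inl (by linarith))
  have hint2 : IntervalIntegrable
      (fun t : ℝ => M ^ (α - 1) + (α - 1) * M ^ (α - 2) * (t - M)) volume (M - 1) (M + 1) :=
    (Continuous.intervalIntegrable (by continuity) _ _)
  have hmono := intervalIntegral.integral_mono_on (by linarith : M - 1 ≤ M + 1) hint2 hint1 hpt
  have hL : ∫ t in (M - 1)..(M + 1), (M ^ (α - 1) + (α - 1) * M ^ (α - 2) * (t - M))
      = 2 * M ^ (α - 1) := by
    have h1 : (fun t : ℝ => M ^ (α - 1) + (α - 1) * M ^ (α - 2) * (t - M))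
        = fun t : ℝ => (M ^ (α - 1) - (α - 1) * M ^ (α - 2) * M) + ((α - 1) * M ^ (α - 2)) * t := by
      funext t; ring
    rw [h1, intervalIntegral.integral_add (intervalIntegrable_const)
      ((by continuity : Continuous fun t : ℝ => (α - 1) * M ^ (α - 2) * t).intervalIntegrable _ _),
      intervalIntegral.integral_const, intervalIntegral.integral_const_mul,
      integral_id, smul_eq_mul]
    ring
  have hR : ∫ t in (M - 1)..(M + 1), t ^ (α - 1) = ((M + 1) ^ α - (M - 1) ^ α) / α := by
    rw [integral_rpow (Or.inl (by linarith))]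
    norm_num
  rw [hL, hR] at hmono
  nlinarith [(le_div_iff₀ hα0).mp hmono]



lemma integrable_dirac' {X : Type*} [MeasurableSpace X] [MeasurableSingletonClass X]
    {f : X → ℝ} (hf : Measurable f) (a : X) : Integrable f (Measure.dirac a) := by
  refine ⟨hf.aestronglyMeasurable, ?_⟩
  simp only [HasFiniteIntegral]
  rw [lintegral_dirac' a hf.enorm]
  exact enorm_lt_top

lemma smul_prod' {X Y : Type*} [MeasurableSpace X] [MeasurableSpace Y]
    (c : ℝ≥0∞) (μ : Measure X) (ν : Measure Y) [SFinite μ] [SFinite ν] :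
    (c • μ).prod ν = c • μ.prod ν := by
  ext s hs
  rw [Measure.prod_apply hs, Measure.smul_apply, Measure.prod_apply hs,
    lintegral_smul_measure, smul_eq_mul]

lemma prod_smul' {X Y : Type*} [MeasurableSpace X] [MeasurableSpace Y]
    (c : ℝ≥0∞) (hc : c ≠ ⊤) (μ : Measure X) (ν : Measure Y) [SFinite μ] [SFinite ν] :
    μ.prod (c • ν) = c • μ.prod ν := by
  ext s hs
  rw [Measure.prod_apply hs, Measure.smul_apply, Measure.prod_apply hs, smul_eq_mul,
    ← lintegral_const_mul' _ _ hc]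
  simp

instance (p q M : ℝ) : SFinite (twoPointLaw p q M) := by
  unfold twoPointLaw; infer_instance

lemma twoPoint_prod (p q M : ℝ) :
    (twoPointLaw p q M).prod (twoPointLaw p q M)
      = ENNReal.ofReal p • (ENNReal.ofReal p • Measure.dirac ((1:ℝ), (1:ℝ)))
        + ENNReal.ofReal p • (ENNReal.ofReal q • Measure.dirac ((1:ℝ), -M))
        + ENNReal.ofReal q • (ENNReal.ofReal p • Measure.dirac (-M, (1:ℝ)))
        + ENNReal.ofReal q • (ENNReal.ofReal q • Measure.dirac (-M, -M)) := by
  simp only [twoPointLaw, Measure.add_prod, Measure.prod_add,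
    smul_prod', prod_smul' _ ENNReal.ofReal_ne_top, Measure.dirac_prod_dirac,
    smul_comm (ENNReal.ofReal q) (ENNReal.ofReal p), smul_add]
  abel

lemma integral_twoPoint_prod {p q M : ℝ} (hp : 0 ≤ p) (hq : 0 ≤ q)
    (f : ℝ × ℝ → ℝ) (hf : Measurable f) :
    ∫ z, f z ∂((twoPointLaw p q M).prod (twoPointLaw p q M))
      = p * p * f (1, 1) + p * q * f (1, -M) + q * p * f (-M, 1) + q * q * f (-M, -M) := by
  have I : ∀ (a : ℝ × ℝ) (c d : ℝ≥0∞), c ≠ ⊤ → d ≠ ⊤ →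
      Integrable f (c • (d • Measure.dirac a)) := fun a c d hc hd =>
    ((integrable_dirac' hf a).smul_measure hd).smul_measure hc
  have ha := I (1, 1) (ENNReal.ofReal p) (ENNReal.ofReal p) ENNReal.ofReal_ne_top ENNReal.ofReal_ne_top
  have hb := I (1, -M) (ENNReal.ofReal p) (ENNReal.ofReal q) ENNReal.ofReal_ne_top ENNReal.ofReal_ne_top
  have hc' := I (-M, 1) (ENNReal.ofReal q) (ENNReal.ofReal p) ENNReal.ofReal_ne_top ENNReal.ofReal_ne_top
  have hd := I (-M, -M) (ENNReal.ofReal q) (ENNReal.ofReal q) ENNReal.ofReal_ne_top ENNReal.ofReal_ne_top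
  rw [twoPoint_prod, integral_add_measure ((ha.add_measure hb).add_measure hc') hd,
    integral_add_measure (ha.add_measure hb) hc', integral_add_measure ha hb]
  simp only [MeasureTheory.integral_smul_measure, integral_dirac, smul_eq_mul,
    ENNReal.toReal_ofReal hp, ENNReal.toReal_ofReal hq]
  ring

lemma myIntegral_pair {Ω : Type*} [MeasurableSpace Ω] (μ : Measure Ω) [IsProbabilityMeasure μ]
    {X Y : Ω → ℝ} (hX : Measurable X) (hY : Measurable Y) (hXY : IndepFun X Y μ)
    {p q M : ℝ} (hp : 0 ≤ p) (hq : 0 ≤ q)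
    (hmX : Measure.map X μ = twoPointLaw p q M) (hmY : Measure.map Y μ = twoPointLaw p q M)
    (f : ℝ × ℝ → ℝ) (hf : Measurable f) :
    ∫ ω, f (X ω, Y ω) ∂μ
      = p * p * f (1, 1) + p * q * f (1, -M) + q * p * f (-M, 1) + q * q * f (-M, -M) := by
  have hmap : Measure.map (fun ω => (X ω, Y ω)) μ = (Measure.map X μ).prod (Measure.map Y μ) :=
    (indepFun_iff_map_prod_eq_prod_map_map hX.aemeasurable hY.aemeasurable).mp hXY
  rw [← integral_map (hX.prodMk hY).aemeasurable hf.aestronglyMeasurable, hmap, hmX, hmY,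
    integral_twoPoint_prod hp hq f hf]

lemma main_core (α c : ℝ) (hα : 2 < α) (hc : 0 < c) {M : ℝ} (hM : max c 1 ≤ M)
    {Ω : Type*} [MeasurableSpace Ω] (μ : Measure Ω) [IsProbabilityMeasure μ]
    {X Y : Ω → ℝ} (hX : Measurable X) (hY : Measurable Y) (hXY : IndepFun X Y μ)
    (hmX : Measure.map X μ = twoPointLaw (1 - c / M) (c / M) M)
    (hmY : Measure.map Y μ = twoPointLaw (1 - c / M) (c / M) M) :
    ((∫ ω, |X ω - Y ω| ^ α ∂μ) - ∫ ω, |X ω + Y ω| ^ α ∂μ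
        = 2 * (1 - c / M) * (c / M) * ((M + 1) ^ α - (M - 1) ^ α)
          - 2 ^ α * M ^ α * (c / M) ^ 2 - 2 ^ α * (1 - c / M) ^ 2
      ∧ M ^ (α - 2) * (4 * (1 - c / M) * α * c - 2 ^ α * c ^ 2)
          - 2 ^ α * (1 - c / M) ^ 2
        ≤ (∫ ω, |X ω - Y ω| ^ α ∂μ) - ∫ ω, |X ω + Y ω| ^ α ∂μ) := by
  have hM1 : (1:ℝ) ≤ M := le_trans (le_max_right c 1) hM
  have hMc : c ≤ M := le_trans (le_max_left c 1) hM
  have hM0 : (0:ℝ) < M := by linarith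
  have hq0 : 0 ≤ c / M := by positivity
  have hq1 : c / M ≤ 1 := (div_le_one hM0).mpr hMc
  have hp0 : 0 ≤ 1 - c / M := by linarith
  have hαne : α ≠ 0 := by linarith
  have hfm1 : Measurable (fun z : ℝ × ℝ => |z.1 - z.2| ^ α) := by fun_prop
  have hfm2 : Measurable (fun z : ℝ × ℝ => |z.1 + z.2| ^ α) := by fun_prop
  have h1 : ∫ ω, |X ω - Y ω| ^ α ∂μ
      = (1 - c/M) * (1 - c/M) * |(1:ℝ) - 1| ^ α + (1 - c/M) * (c/M) * |(1:ℝ) - -M| ^ α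
        + (c/M) * (1 - c/M) * |(-M) - 1| ^ α + (c/M) * (c/M) * |(-M) - -M| ^ α :=
    myIntegral_pair μ hX hY hXY hp0 hq0 hmX hmY _ hfm1
  have h2 : ∫ ω, |X ω + Y ω| ^ α ∂μ
      = (1 - c/M) * (1 - c/M) * |(1:ℝ) + 1| ^ α + (1 - c/M) * (c/M) * |(1:ℝ) + -M| ^ α
        + (c/M) * (1 - c/M) * |(-M) + 1| ^ α + (c/M) * (c/M) * |(-M) + -M| ^ α :=
    myIntegral_pair μ hX hY hXY hp0 hq0 hmX hmY _ hfm2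
  have v0 : |(1:ℝ) - 1| ^ α = 0 := by rw [sub_self, abs_zero, Real.zero_rpow hαne]
  have v0' : |(-M) - -M| ^ α = 0 := by rw [sub_self, abs_zero, Real.zero_rpow hαne]
  have v1 : |(1:ℝ) - -M| ^ α = (M + 1) ^ α := by
    rw [sub_neg_eq_add, abs_of_nonneg (by linarith), add_comm]
  have v2 : |(-M : ℝ) - 1| ^ α = (M + 1) ^ α := by
    rw [show (-M : ℝ) - 1 = -(M + 1) by ring, abs_neg, abs_of_nonneg (by linarith)]
  have w0 : |(1:ℝ) + 1| ^ α = 2 ^ α := by norm_num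
  have w1 : |(1:ℝ) + -M| ^ α = (M - 1) ^ α := by
    rw [show (1:ℝ) + -M = -(M - 1) by ring, abs_neg, abs_of_nonneg (by linarith)]
  have w2 : |(-M : ℝ) + 1| ^ α = (M - 1) ^ α := by
    rw [show (-M : ℝ) + 1 = -(M - 1) by ring, abs_neg, abs_of_nonneg (by linarith)]
  have w3 : |(-M : ℝ) + -M| ^ α = 2 ^ α * M ^ α := by
    rw [show (-M : ℝ) + -M = -(2 * M) by ring, abs_neg, abs_of_nonneg (by linarith),
      Real.mul_rpow (by norm_num) hM0.le]
  rw [v0, v0', v1, v2] at h1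
  rw [w0, w1, w2, w3] at h2
  have heq : (∫ ω, |X ω - Y ω| ^ α ∂μ) - ∫ ω, |X ω + Y ω| ^ α ∂μ
      = 2 * (1 - c / M) * (c / M) * ((M + 1) ^ α - (M - 1) ^ α)
        - 2 ^ α * M ^ α * (c / M) ^ 2 - 2 ^ α * (1 - c / M) ^ 2 := by
    rw [h1, h2]; ring
  refine ⟨heq, ?_⟩
  rw [heq]
  have e1 : M ^ (α - 1) = M ^ (α - 2) * M := by
    rw [← Real.rpow_add_one hM0.ne' (α - 2), show α - 2 + 1 = α - 1 by ring]
  have e2 : M ^ α = M ^ (α - 1) * M := by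
    rw [← Real.rpow_add_one hM0.ne' (α - 1), show α - 1 + 1 = α by ring]
  have hqM : c / M * M = c := div_mul_cancel₀ c hM0.ne'
  have hD := key_ineq hα hM1
  have hpq : (0:ℝ) ≤ 2 * (1 - c / M) * (c / M) := by positivity
  have hmul := mul_le_mul_of_nonneg_left hD hpq
  have A : 2 * (1 - c/M) * (c/M) * (2 * α * M ^ (α - 1))
      = M ^ (α - 2) * (4 * (1 - c/M) * α * c) := by
    rw [e1]
    field_simp
    ring
  have B : 2 ^ α * M ^ α * (c/M) ^ 2 = M ^ (α - 2) * (2 ^ α * c ^ 2) := by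
    rw [e2, e1]
    field_simp
  linarith [hmul, A, B]

set_option maxHeartbeats 1000000

/-- Fix `α > 2` and `c > 0`; for `M ≥ max{c,1}` set `q = c/M`, `p = 1 − q`, and let
`X_M, Y_M` be i.i.d. with `P(X_M = 1) = p`, `P(X_M = −M) = q`. Then
`E|X_M−Y_M|^α − E|X_M+Y_M|^α = 2pq[(M+1)^α − (M−1)^α] − 2^α M^α q² − 2^α p²
  ≥ M^{α−2}(4pαc − 2^α c²) − 2^α p²`,
and if `c < 2^{2−α} α` then `E|X_M−Y_M|^α > E|X_M+Y_M|^α` for all large `M`. -/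
theorem twoPoint_expectation_abs_sub_rpow_sub_abs_add_rpow (α c : ℝ)
    (hα : 2 < α) (hc : 0 < c) :
    (∀ M : ℝ, max c 1 ≤ M →
      ∀ (Ω : Type*) (_ : MeasurableSpace Ω) (μ : Measure Ω), IsProbabilityMeasure μ →
        ∀ X Y : Ω → ℝ, Measurable X → Measurable Y → IndepFun X Y μ →
          Measure.map X μ = twoPointLaw (1 - c / M) (c / M) M →
          Measure.map Y μ = twoPointLaw (1 - c / M) (c / M) M →
          ((∫ ω, |X ω - Y ω| ^ α ∂μ) - ∫ ω, |X ω + Y ω| ^ α ∂μ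
              = 2 * (1 - c / M) * (c / M) * ((M + 1) ^ α - (M - 1) ^ α)
                - 2 ^ α * M ^ α * (c / M) ^ 2 - 2 ^ α * (1 - c / M) ^ 2
            ∧ M ^ (α - 2) * (4 * (1 - c / M) * α * c - 2 ^ α * c ^ 2)
                - 2 ^ α * (1 - c / M) ^ 2
              ≤ (∫ ω, |X ω - Y ω| ^ α ∂μ) - ∫ ω, |X ω + Y ω| ^ α ∂μ))
    ∧ (c < 2 ^ (2 - α) * α → ∃ M₀ : ℝ, ∀ M : ℝ, M₀ ≤ M → max c 1 ≤ M →
        ∀ (Ω : Type*) (_ : MeasurableSpace Ω) (μ : Measure Ω), IsProbabilityMeasure μ →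
          ∀ X Y : Ω → ℝ, Measurable X → Measurable Y → IndepFun X Y μ →
            Measure.map X μ = twoPointLaw (1 - c / M) (c / M) M →
            Measure.map Y μ = twoPointLaw (1 - c / M) (c / M) M →
            (∫ ω, |X ω + Y ω| ^ α ∂μ) < ∫ ω, |X ω - Y ω| ^ α ∂μ) := by
  constructor
  · intro M hM Ω mΩ μ hμ X Y hX hY hXY hmX hmY
    exact main_core α c hα hc hM μ hX hY hXY hmX hmY
  · intro hsmall
    set ε : ℝ := 4 * α * c - 2 ^ α * c ^ 2 with hεdef
    have h2pos : (0:ℝ) < 2 ^ α := Real.rpow_pos_of_pos (by norm_num) α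
    have h2a : (2:ℝ) ^ (2 - α) = 4 / 2 ^ α := by
      rw [Real.rpow_sub (by norm_num : (0:ℝ) < 2)]
      norm_num [show ((2:ℝ) ^ (2:ℝ) = 4) by
        rw [show (2:ℝ) = ((2:ℕ):ℝ) by norm_num, Real.rpow_natCast]; norm_num]
    have hε : 0 < ε := by
      rw [h2a, div_mul_eq_mul_div] at hsmall
      have h4 : c * 2 ^ α < 4 * α := by
        have := (lt_div_iff₀ h2pos).mp hsmall
        linarith
      nlinarith [mul_pos hc (sub_pos.mpr h4)]
    set K : ℝ := (2 ^ (α + 1) / ε) ^ (α - 2)⁻¹ with hKdef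
    have hK0 : 0 ≤ K := Real.rpow_nonneg (by positivity) _
    refine ⟨max (8 * α * c ^ 2 / ε + 1) (K + 1), fun M hM₀ hM Ω mΩ μ hμ X Y hX hY hXY hmX hmY => ?_⟩
    have hM1 : (1:ℝ) ≤ M := le_trans (le_max_right c 1) hM
    have hMc : c ≤ M := le_trans (le_max_left c 1) hM
    have hM0 : (0:ℝ) < M := by linarith
    have hq0 : 0 ≤ c / M := by positivity
    have hq1 : c / M ≤ 1 := (div_le_one hM0).mpr hMc
    have hp0 : 0 ≤ 1 - c / M := by linarith
    have hMa : 8 * α * c ^ 2 / ε + 1 ≤ M := le_trans (le_max_left _ _) hM₀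
    have hMb : K + 1 ≤ M := le_trans (le_max_right _ _) hM₀
    have hcore := main_core α c hα hc hM μ hX hY hXY hmX hmY
    rw [← sub_pos]
    refine lt_of_lt_of_le ?_ hcore.2
    -- step 1 : 4(1-c/M)αc - 2^α c² ≥ ε/2
    have h8 : 8 * α * c ^ 2 ≤ M * ε := (div_le_iff₀ hε).mp (by linarith)
    have hstep1 : ε / 2 ≤ 4 * (1 - c / M) * α * c - 2 ^ α * c ^ 2 := by
      have hdiv : 4 * α * c * (c / M) ≤ ε / 2 := by
        rw [mul_div_assoc', div_le_div_iff₀ hM0 (by norm_num)]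
        nlinarith
      nlinarith
    have hMα2 : (0:ℝ) ≤ M ^ (α - 2) := (Real.rpow_pos_of_pos hM0 _).le
    have hKpow : K ^ (α - 2) = 2 ^ (α + 1) / ε := by
      rw [hKdef, ← Real.rpow_mul (by positivity), inv_mul_cancel₀ (by linarith : α - 2 ≠ 0),
        Real.rpow_one]
    have hKM : K ^ (α - 2) < M ^ (α - 2) :=
      Real.rpow_lt_rpow hK0 (by linarith) (by linarith)
    have hMgt : 2 ^ (α + 1) / ε < M ^ (α - 2) := by rwa [hKpow] at hKM
    have h2a1 : (2:ℝ) ^ (α + 1) = 2 ^ α * 2 := Real.rpow_add_one (by norm_num) α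
    have hmul1 := mul_le_mul_of_nonneg_left hstep1 hMα2
    have hmul2 := mul_lt_mul_of_pos_right hMgt (half_pos hε)
    have hid : 2 ^ (α + 1) / ε * (ε / 2) = 2 ^ α := by
      rw [h2a1]; field_simp
    have hpsq : (1 - c / M) ^ 2 ≤ 1 := by
      nlinarith [mul_nonneg hq0 (by linarith : (0:ℝ) ≤ 2 - c / M)]
    linarith [hmul1, hmul2, hid, mul_le_mul_of_nonneg_left hpsq h2pos.le]
end

section
/- Let a ≥ 0, b ≥ 0, and let μ be a measure on (0, ∞) satisfying ∫₀^∞ min(t, 1) μ(dt) < ∞. Define G : [0,∞) → [0,∞) by G(λ) = a + bλ + ∫₀^∞ (1 − e^{−tλ}) μ(dt), and set F(λ) = G(λ²). Then for any pair of independent, identically distributed real-valued random variables X and Y, one has E F(|X − Y|) ≤ E F(|X + Y|) (where both sides may equal +∞). -/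
open MeasureTheory ProbabilityTheory Real Filter

lemma one_sub_exp_neg_le (w : ℝ) : 1 - Real.exp (-w) ≤ w := by
  have := Real.add_one_le_exp (-w); linarith

lemma one_sub_exp_nonneg {z : ℝ} (hz : z ≤ 0) : 0 ≤ 1 - Real.exp z := by
  have : Real.exp z ≤ 1 := Real.exp_le_one_iff.2 hz
  linarith

lemma seq_le (n : ℕ) (u : ℝ) :
    ((n : ℝ) + 1) * (1 - Real.exp (-(1 / ((n : ℝ) + 1) * u))) ≤ u := by
  have h1 : 1 - Real.exp (-(1 / ((n : ℝ) + 1) * u)) ≤ 1 / ((n : ℝ) + 1) * u :=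
    one_sub_exp_neg_le _
  have hn : (0:ℝ) < (n : ℝ) + 1 := by positivity
  have := mul_le_mul_of_nonneg_left h1 hn.le
  have h2 : ((n : ℝ) + 1) * (1 / ((n : ℝ) + 1) * u) = u := by field_simp
  linarith

lemma tendsto_seq (u : ℝ) :
    Tendsto (fun n : ℕ => ((n : ℝ) + 1) * (1 - Real.exp (-(1 / ((n : ℝ) + 1) * u))))
      atTop (nhds u) := by
  rcases eq_or_ne u 0 with rfl | hu
  · simp
  · set v : ℕ → ℝ := fun n => -(1 / ((n : ℝ) + 1) * u) with hv
    have hvne : ∀ n, v n ≠ 0 := by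
      intro n
      simp only [hv, ne_eq, neg_eq_zero, mul_eq_zero, not_or]
      constructor
      · positivity
      · exact hu
    have hv0 : Tendsto v atTop (nhds 0) := by
      rw [hv]
      have h1 : Tendsto (fun n : ℕ => 1 / ((n : ℝ) + 1) * u) atTop (nhds (0 * u)) :=
        tendsto_one_div_add_atTop_nhds_zero_nat.mul_const u
      rw [zero_mul] at h1
      simpa using h1.neg
    have hvmem : Tendsto v atTop (nhdsWithin 0 {(0:ℝ)}ᶜ) :=
      tendsto_nhdsWithin_of_tendsto_nhds_of_eventually_within v hv0
        (Eventually.of_forall fun n => hvne n)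
    have hslope : Tendsto (slope Real.exp 0) (nhdsWithin 0 {(0:ℝ)}ᶜ) (nhds 1) := by
      have := hasDerivAt_iff_tendsto_slope.1 (Real.hasDerivAt_exp 0)
      rwa [Real.exp_zero] at this
    have hcomp : Tendsto (fun n => u * slope Real.exp 0 (v n)) atTop (nhds (u * 1)) :=
      (hslope.comp hvmem).const_mul u
    rw [mul_one] at hcomp
    apply hcomp.congr
    intro n
    rw [slope_def_field, Real.exp_zero, sub_zero, mul_div_assoc',
      div_eq_iff (hvne n)]
    have h3 : ((n : ℝ) + 1) * v n = -u := by
      rw [hv]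
      field_simp
    linear_combination (Real.exp (v n) - 1) * h3

lemma sigmaFinite_restrict (μ : Measure ℝ)
    (hμ : ∫⁻ t in Set.Ioi (0 : ℝ), ENNReal.ofReal (min t 1) ∂μ ≠ ⊤) :
    SigmaFinite (μ.restrict (Set.Ioi 0)) := by
  have key : ∀ n : ℕ, μ (Set.Ioi (1 / ((n : ℝ) + 1))) < ⊤ := by
    intro n
    set ε : ℝ := 1 / ((n : ℝ) + 1) with hε'
    have hε : 0 < ε := by positivity
    have hε1 : ε ≤ 1 := by
      rw [hε', div_le_one (by positivity)]
      linarith [Nat.cast_nonneg (α := ℝ) n]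
    have h1 : ENNReal.ofReal ε * μ (Set.Ioi ε) ≤
        ∫⁻ t in Set.Ioi (0 : ℝ), ENNReal.ofReal (min t 1) ∂μ := by
      calc ENNReal.ofReal ε * μ (Set.Ioi ε) = ∫⁻ _ in Set.Ioi ε, ENNReal.ofReal ε ∂μ :=
            (setLIntegral_const _ _).symm
        _ ≤ ∫⁻ t in Set.Ioi ε, ENNReal.ofReal (min t 1) ∂μ :=
            setLIntegral_mono ((measurable_id.min measurable_const).ennreal_ofReal)
              fun t ht => ENNReal.ofReal_le_ofReal (le_min (le_of_lt ht) hε1)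
        _ ≤ ∫⁻ t in Set.Ioi (0:ℝ), ENNReal.ofReal (min t 1) ∂μ :=
            lintegral_mono_set fun t ht => lt_trans hε ht
    by_contra h
    rw [not_lt, top_le_iff] at h
    rw [h, ENNReal.mul_top (by simpa using hε)] at h1
    exact hμ (top_le_iff.1 h1)
  refine ⟨⟨⟨fun n => Set.Iic 0 ∪ Set.Ioi (1 / ((n : ℝ) + 1)), fun _ => trivial, ?_, ?_⟩⟩⟩
  · intro n
    rw [Measure.restrict_apply (measurableSet_Iic.union measurableSet_Ioi)]
    refine lt_of_le_of_lt (measure_mono ?_) (key n)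
    rintro x ⟨hx | hx, hx0⟩
    · exact absurd (Set.mem_Iic.1 hx) (not_le.2 hx0)
    · exact hx
  · rw [Set.eq_univ_iff_forall]
    intro x
    rcases le_or_gt x 0 with h | h
    · exact Set.mem_iUnion.2 ⟨0, Or.inl h⟩
    · obtain ⟨n, hn⟩ := exists_nat_gt (1 / x)
      refine Set.mem_iUnion.2 ⟨n, Or.inr ?_⟩
      show 1 / ((n : ℝ) + 1) < x
      rw [div_lt_iff₀ (by positivity)]
      rw [div_lt_iff₀ h] at hn
      nlinarith

lemma integrable_one_sub_exp (μ : Measure ℝ)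
    (hμ : ∫⁻ t in Set.Ioi (0 : ℝ), ENNReal.ofReal (min t 1) ∂μ ≠ ⊤)
    (s : ℝ) (hs : 0 ≤ s) :
    Integrable (fun t => 1 - Real.exp (-(t * s))) (μ.restrict (Set.Ioi 0)) := by
  constructor
  · exact (continuous_const.sub
      (Real.continuous_exp.comp (continuous_id.mul continuous_const).neg)).aestronglyMeasurable
  · show (∫⁻ t in Set.Ioi (0:ℝ), (‖1 - Real.exp (-(t * s))‖₊ : ENNReal) ∂μ) < ⊤
    have hb : ∀ t ∈ Set.Ioi (0:ℝ), (‖1 - Real.exp (-(t * s))‖₊ : ENNReal)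
        ≤ ENNReal.ofReal ((s + 1) * min t 1) := by
      intro t ht
      have ht0 : (0:ℝ) < t := ht
      have hnn : 0 ≤ 1 - Real.exp (-(t * s)) :=
        one_sub_exp_nonneg (neg_nonpos.2 (mul_nonneg ht0.le hs))
      rw [← enorm_eq_nnnorm, Real.enorm_eq_ofReal_abs, abs_of_nonneg hnn]
      apply ENNReal.ofReal_le_ofReal
      rcases le_total t 1 with h | h
      · rw [min_eq_left h]
        have h1 : 1 - Real.exp (-(t * s)) ≤ t * s := one_sub_exp_neg_le _
        nlinarith
      · rw [min_eq_right h]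
        have h2 : 0 < Real.exp (-(t * s)) := Real.exp_pos _
        nlinarith
    calc ∫⁻ t in Set.Ioi (0:ℝ), (‖1 - Real.exp (-(t * s))‖₊ : ENNReal) ∂μ
        ≤ ∫⁻ t in Set.Ioi (0:ℝ), ENNReal.ofReal ((s + 1) * min t 1) ∂μ :=
          setLIntegral_mono ((measurable_const.mul
            (measurable_id.min measurable_const)).ennreal_ofReal) hb
      _ = ENNReal.ofReal (s + 1) * ∫⁻ t in Set.Ioi (0:ℝ), ENNReal.ofReal (min t 1) ∂μ := by
          rw [← lintegral_const_mul _ ((measurable_id'.min measurable_const).ennreal_ofReal)]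
          congr 1
          funext t
          rw [ENNReal.ofReal_mul (by linarith)]
      _ < ⊤ := ENNReal.mul_lt_top ENNReal.ofReal_lt_top hμ.lt_top


lemma exp_tsum (x : ℝ) : Real.exp x = ∑' n : ℕ, x ^ n / n.factorial := by
  rw [Real.exp_eq_exp_ℝ, NormedSpace.exp_eq_tsum_div]

-- series identity
lemma series_id (t x y : ℝ) :
    Real.exp (-(t * (x - y) ^ 2)) - Real.exp (-(t * (x + y) ^ 2))
      = ∑' n : ℕ, ((2 * t) ^ n / n.factorial * (1 - (-1 : ℝ) ^ n)) *
          ((Real.exp (-(t * x ^ 2)) * x ^ n) * (Real.exp (-(t * y ^ 2)) * y ^ n)) := by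
  set z := 2 * t * (x * y) with hz
  have hterm : ∀ n : ℕ, ((2 * t) ^ n / n.factorial * (1 - (-1 : ℝ) ^ n)) *
          ((Real.exp (-(t * x ^ 2)) * x ^ n) * (Real.exp (-(t * y ^ 2)) * y ^ n))
        = (Real.exp (-(t * x ^ 2)) * Real.exp (-(t * y ^ 2))) *
            (z ^ n / n.factorial - (-z) ^ n / n.factorial) := by
    intro n
    have h1 : (-z) ^ n = (-1 : ℝ) ^ n * z ^ n := by rw [neg_pow]
    have h2 : z ^ n = (2 * t) ^ n * (x ^ n * y ^ n) := by rw [hz]; ring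
    rw [h1, h2]
    ring
  rw [tsum_congr hterm, tsum_mul_left,
    Summable.tsum_sub (Real.summable_pow_div_factorial z) (Real.summable_pow_div_factorial (-z)),
    ← exp_tsum, ← exp_tsum,
    show (-(t * (x - y) ^ 2)) = -(t * x ^ 2) + -(t * y ^ 2) + z by rw [hz]; ring,
    show (-(t * (x + y) ^ 2)) = -(t * x ^ 2) + -(t * y ^ 2) + -z by rw [hz]; ring,
    Real.exp_add, Real.exp_add, Real.exp_add, Real.exp_add]
  ring

-- Bochner form of the key inequality
lemma key_bochner (t : ℝ) (ht : 0 ≤ t) {Ω : Type*} [MeasurableSpace Ω] (P : Measure Ω)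
    [IsProbabilityMeasure P] (X Y : Ω → ℝ) (hX : Measurable X) (hY : Measurable Y)
    (hindep : IndepFun X Y P) (hid : IdentDistrib X Y P P) :
    ∫ ω, Real.exp (-(t * (X ω + Y ω) ^ 2)) ∂P ≤ ∫ ω, Real.exp (-(t * (X ω - Y ω) ^ 2)) ∂P := by
  set g : ℕ → ℝ → ℝ := fun n x => Real.exp (-(t * x ^ 2)) * x ^ n with hg
  have hgm : ∀ n, Measurable (g n) := by
    intro n
    exact ((measurable_id.pow_const 2 |>.const_mul t).neg.exp).mul (measurable_id.pow_const n)
  set c : ℕ → ℝ := fun n => (2 * t) ^ n / n.factorial * (1 - (-1 : ℝ) ^ n) with hc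
  have hcn : ∀ n, 0 ≤ c n := by
    intro n
    have h1 : ((-1 : ℝ)) ^ n ≤ 1 := by
      rcases Nat.even_or_odd n with h | h
      · rw [h.neg_one_pow]
      · rw [h.neg_one_pow]; norm_num
    have h2 : (0:ℝ) ≤ (2 * t) ^ n / n.factorial := by positivity
    exact mul_nonneg h2 (by linarith)
  set f : ℕ → Ω → ℝ := fun n ω => c n * (g n (X ω) * g n (Y ω)) with hf
  have hfm : ∀ n, Measurable (f n) := fun n =>
    (((hgm n).comp hX).mul ((hgm n).comp hY)).const_mul (c n)
  -- lintegral bound for integral_tsum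
  have hbound : ∑' n, ∫⁻ ω, ‖f n ω‖₊ ∂P ≠ ⊤ := by
    rw [← lintegral_tsum (fun n => ((hfm n).nnnorm.coe_nnreal_ennreal).aemeasurable)]
    have hle : ∀ ω, (∑' n, (‖f n ω‖₊ : ENNReal)) ≤ 2 := by
      intro ω
      set x := X ω; set y := Y ω
      set d : ℕ → ℝ := fun n => 2 * ((2 * t * (|x| * |y|)) ^ n / n.factorial) *
        (Real.exp (-(t * x ^ 2)) * Real.exp (-(t * y ^ 2))) with hd
      have hsumd : Summable d :=
        ((Real.summable_pow_div_factorial _).mul_left 2).mul_right _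
      have hdn : ∀ n, 0 ≤ d n := by
        intro n; have : (0:ℝ) ≤ (2 * t * (|x| * |y|)) ^ n := by positivity
        positivity
      have hfd : ∀ n, |f n ω| ≤ d n := by
        intro n
        have h1 : |f n ω| = c n * (Real.exp (-(t * x ^ 2)) * |x| ^ n *
            (Real.exp (-(t * y ^ 2)) * |y| ^ n)) := by
          rw [hf, abs_mul, abs_of_nonneg (hcn n), abs_mul]
          simp only [hg, abs_mul, abs_of_nonneg (Real.exp_pos _).le, abs_pow]
          rfl
        have h2 : c n ≤ 2 * ((2 * t) ^ n / n.factorial) := by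
          rw [hc]
          have : (1 - (-1 : ℝ) ^ n) ≤ 2 := by
            have : (-1 : ℝ) ^ n = 1 ∨ (-1 : ℝ) ^ n = -1 := by
              rcases Nat.even_or_odd n with h | h
              · exact Or.inl h.neg_one_pow
              · exact Or.inr h.neg_one_pow
            rcases this with h | h <;> rw [h] <;> norm_num
          have h3 : (0:ℝ) ≤ (2 * t) ^ n / n.factorial := by positivity
          nlinarith
        rw [h1]
        calc c n * (Real.exp (-(t * x ^ 2)) * |x| ^ n * (Real.exp (-(t * y ^ 2)) * |y| ^ n))
            ≤ 2 * ((2 * t) ^ n / n.factorial) *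
              (Real.exp (-(t * x ^ 2)) * |x| ^ n * (Real.exp (-(t * y ^ 2)) * |y| ^ n)) := by
              apply mul_le_mul_of_nonneg_right h2; positivity
          _ = d n := by simp only [hd]; ring
      have hsum : ∑' n, d n ≤ 2 := by
        have h5 : ∑' n, d n = 2 * Real.exp (2 * t * (|x| * |y|)) *
            (Real.exp (-(t * x ^ 2)) * Real.exp (-(t * y ^ 2))) := by
          rw [hd]
          rw [tsum_mul_right, tsum_mul_left, ← exp_tsum]
        rw [h5, ← Real.exp_add, mul_assoc, ← Real.exp_add]
        have h6 : 2 * t * (|x| * |y|) + (-(t * x ^ 2) + -(t * y ^ 2)) ≤ 0 := by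
          have h7 : 2 * (|x| * |y|) ≤ |x| ^ 2 + |y| ^ 2 := by
            have := two_mul_le_add_sq |x| |y|; linarith
          have h8 : |x| ^ 2 = x ^ 2 := sq_abs x
          have h9 : |y| ^ 2 = y ^ 2 := sq_abs y
          nlinarith [abs_nonneg x, abs_nonneg y]
        have h7 := Real.exp_le_one_iff.2 h6
        linarith
      calc (∑' n, (‖f n ω‖₊ : ENNReal)) = ∑' n, ENNReal.ofReal |f n ω| := by
            congr 1; funext n; exact Real.enorm_eq_ofReal_abs _
        _ ≤ ∑' n, ENNReal.ofReal (d n) := ENNReal.tsum_le_tsum fun n =>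
            ENNReal.ofReal_le_ofReal (hfd n)
        _ = ENNReal.ofReal (∑' n, d n) := (ENNReal.ofReal_tsum_of_nonneg hdn hsumd).symm
        _ ≤ ENNReal.ofReal 2 := ENNReal.ofReal_le_ofReal hsum
        _ = 2 := by norm_num
    have hfin : ∫⁻ ω, ∑' n, (‖f n ω‖₊ : ENNReal) ∂P ≤ 2 := by
      calc ∫⁻ ω, ∑' n, (‖f n ω‖₊ : ENNReal) ∂P ≤ ∫⁻ _, 2 ∂P := lintegral_mono hle
        _ = 2 := by simp
    exact ne_top_of_le_ne_top (by norm_num) hfin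
  have hint : ∫ ω, (∑' n, f n ω) ∂P = ∑' n, ∫ ω, f n ω ∂P :=
    integral_tsum (fun n => (hfm n).aestronglyMeasurable) hbound
  have hA : ∀ n, ∫ ω, f n ω ∂P = c n * ((∫ ω, g n (X ω) ∂P) * (∫ ω, g n (X ω) ∂P)) := by
    intro n
    have h1 : ∫ ω, f n ω ∂P = c n * ∫ ω, (g n (X ω) * g n (Y ω)) ∂P := by
      simp only [hf]; rw [integral_const_mul]
    have h2 : ∫ ω, (g n (X ω) * g n (Y ω)) ∂P
        = (∫ ω, g n (X ω) ∂P) * (∫ ω, g n (Y ω) ∂P) :=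
      (hindep.comp (hgm n) (hgm n)).integral_fun_mul_eq_mul_integral
        ((hgm n).comp hX).aestronglyMeasurable ((hgm n).comp hY).aestronglyMeasurable
    have h3 : ∫ ω, g n (Y ω) ∂P = ∫ ω, g n (X ω) ∂P := ((hid.comp (hgm n)).integral_eq).symm
    rw [h1, h2, h3]
  have hpos : 0 ≤ ∑' n, ∫ ω, f n ω ∂P :=
    tsum_nonneg fun n => by rw [hA n]; exact mul_nonneg (hcn n) (mul_self_nonneg _)
  have hpt : ∀ ω, ∑' n, f n ω
      = Real.exp (-(t * (X ω - Y ω) ^ 2)) - Real.exp (-(t * (X ω + Y ω) ^ 2)) := fun ω =>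
    (series_id t (X ω) (Y ω)).symm
  have hmsub : Measurable fun ω => Real.exp (-(t * (X ω - Y ω) ^ 2)) :=
    (((hX.sub hY).pow_const 2 |>.const_mul t).neg.exp)
  have hmadd : Measurable fun ω => Real.exp (-(t * (X ω + Y ω) ^ 2)) :=
    (((hX.add hY).pow_const 2 |>.const_mul t).neg.exp)
  have hexple : ∀ r : ℝ, ‖Real.exp (-(t * r ^ 2))‖ ≤ 1 := by
    intro r
    rw [Real.norm_eq_abs, abs_of_pos (Real.exp_pos _)]
    exact Real.exp_le_one_iff.2 (neg_nonpos.2 (mul_nonneg ht (sq_nonneg r)))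
  have hi1 : Integrable (fun ω => Real.exp (-(t * (X ω - Y ω) ^ 2))) P :=
    Integrable.mono' (integrable_const 1) hmsub.aestronglyMeasurable
      (Filter.Eventually.of_forall fun ω => hexple _)
  have hi2 : Integrable (fun ω => Real.exp (-(t * (X ω + Y ω) ^ 2))) P :=
    Integrable.mono' (integrable_const 1) hmadd.aestronglyMeasurable
      (Filter.Eventually.of_forall fun ω => hexple _)
  have h9 : ∫ ω, (Real.exp (-(t * (X ω - Y ω) ^ 2)) - Real.exp (-(t * (X ω + Y ω) ^ 2))) ∂P
      = ∑' n, ∫ ω, f n ω ∂P := by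
    rw [← hint]
    exact integral_congr_ae (Filter.Eventually.of_forall fun ω => (hpt ω).symm)
  rw [integral_sub hi1 hi2] at h9
  linarith


lemma key_lintegral (t : ℝ) (ht : 0 ≤ t) {Ω : Type*} [MeasurableSpace Ω] (P : Measure Ω)
    [IsProbabilityMeasure P] (X Y : Ω → ℝ) (hX : Measurable X) (hY : Measurable Y)
    (hindep : IndepFun X Y P) (hid : IdentDistrib X Y P P) :
    ∫⁻ ω, ENNReal.ofReal (1 - Real.exp (-(t * (X ω - Y ω) ^ 2))) ∂P
      ≤ ∫⁻ ω, ENNReal.ofReal (1 - Real.exp (-(t * (X ω + Y ω) ^ 2))) ∂P := by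
  have hmsub : Measurable fun ω => Real.exp (-(t * (X ω - Y ω) ^ 2)) :=
    (((hX.sub hY).pow_const 2 |>.const_mul t).neg.exp)
  have hmadd : Measurable fun ω => Real.exp (-(t * (X ω + Y ω) ^ 2)) :=
    (((hX.add hY).pow_const 2 |>.const_mul t).neg.exp)
  have hexple : ∀ r : ℝ, ‖Real.exp (-(t * r ^ 2))‖ ≤ 1 := by
    intro r
    rw [Real.norm_eq_abs, abs_of_pos (Real.exp_pos _)]
    exact Real.exp_le_one_iff.2 (neg_nonpos.2 (mul_nonneg ht (sq_nonneg r)))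
  have hi1 : Integrable (fun ω => Real.exp (-(t * (X ω - Y ω) ^ 2))) P :=
    Integrable.mono' (integrable_const 1) hmsub.aestronglyMeasurable
      (Filter.Eventually.of_forall fun ω => hexple _)
  have hi2 : Integrable (fun ω => Real.exp (-(t * (X ω + Y ω) ^ 2))) P :=
    Integrable.mono' (integrable_const 1) hmadd.aestronglyMeasurable
      (Filter.Eventually.of_forall fun ω => hexple _)
  have hisub : Integrable (fun ω => 1 - Real.exp (-(t * (X ω - Y ω) ^ 2))) P :=
    (integrable_const 1).sub hi1
  have hiadd : Integrable (fun ω => 1 - Real.exp (-(t * (X ω + Y ω) ^ 2))) P :=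
    (integrable_const 1).sub hi2
  have hae1 : 0 ≤ᵐ[P] fun ω => 1 - Real.exp (-(t * (X ω - Y ω) ^ 2)) :=
    Filter.Eventually.of_forall fun ω =>
      one_sub_exp_nonneg (neg_nonpos.2 (mul_nonneg ht (sq_nonneg _)))
  have hae2 : 0 ≤ᵐ[P] fun ω => 1 - Real.exp (-(t * (X ω + Y ω) ^ 2)) :=
    Filter.Eventually.of_forall fun ω =>
      one_sub_exp_nonneg (neg_nonpos.2 (mul_nonneg ht (sq_nonneg _)))
  rw [← ofReal_integral_eq_lintegral_ofReal hisub hae1,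
    ← ofReal_integral_eq_lintegral_ofReal hiadd hae2]
  apply ENNReal.ofReal_le_ofReal
  rw [integral_sub (integrable_const 1) hi1, integral_sub (integrable_const 1) hi2]
  have := key_bochner t ht P X Y hX hY hindep hid
  linarith

lemma ofReal_F_eq (a b : ℝ) (ha : 0 ≤ a) (hb : 0 ≤ b) (μ : Measure ℝ)
    (hμ : ∫⁻ t in Set.Ioi (0 : ℝ), ENNReal.ofReal (min t 1) ∂μ ≠ ⊤)
    (G F : ℝ → ℝ)
    (hG : ∀ l : ℝ, 0 ≤ l →
      G l = a + b * l + ∫ t in Set.Ioi (0 : ℝ), (1 - Real.exp (-t * l)) ∂μ)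
    (hF : ∀ l : ℝ, 0 ≤ l → F l = G (l ^ 2)) (r : ℝ) :
    ENNReal.ofReal (F |r|) = ENNReal.ofReal a + ENNReal.ofReal b * ENNReal.ofReal (r ^ 2)
      + ∫⁻ t in Set.Ioi (0 : ℝ), ENNReal.ofReal (1 - Real.exp (-(t * r ^ 2))) ∂μ := by
  have h0 : (0:ℝ) ≤ r ^ 2 := sq_nonneg r
  have h1 : F |r| = G (r ^ 2) := by rw [hF _ (abs_nonneg r), sq_abs]
  rw [h1, hG _ h0]
  simp only [neg_mul]
  have hint := integrable_one_sub_exp μ hμ (r ^ 2) h0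
  have hae : 0 ≤ᵐ[μ.restrict (Set.Ioi 0)] fun t => 1 - Real.exp (-(t * r ^ 2)) :=
    (ae_restrict_iff' measurableSet_Ioi).2 (Filter.Eventually.of_forall fun t ht =>
      one_sub_exp_nonneg (neg_nonpos.2 (mul_nonneg (le_of_lt ht) h0)))
  have hI0 : 0 ≤ ∫ t in Set.Ioi (0:ℝ), (1 - Real.exp (-(t * r ^ 2))) ∂μ :=
    integral_nonneg_of_ae hae
  rw [ENNReal.ofReal_add (by nlinarith) hI0, ENNReal.ofReal_add ha (mul_nonneg hb h0),
    ENNReal.ofReal_mul hb, ofReal_integral_eq_lintegral_ofReal hint hae]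

/-- Let `G(λ) = a + bλ + ∫₀^∞ (1 − e^{−tλ}) μ(dt)` be a Bernstein function
(`a, b ≥ 0`, `∫₀^∞ min(t,1) μ(dt) < ∞`) and `F(λ) = G(λ²)`. Then for any pair of
i.i.d. real random variables `X, Y`, `E F(|X−Y|) ≤ E F(|X+Y|)` (both sides
possibly `+∞`). -/
theorem bernstein_expectation_sub_le_expectation_add
    (a b : ℝ) (ha : 0 ≤ a) (hb : 0 ≤ b) (μ : Measure ℝ)
    (hμ : ∫⁻ t in Set.Ioi (0 : ℝ), ENNReal.ofReal (min t 1) ∂μ ≠ ⊤)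
    (G F : ℝ → ℝ)
    (hG : ∀ l : ℝ, 0 ≤ l →
      G l = a + b * l + ∫ t in Set.Ioi (0 : ℝ), (1 - Real.exp (-t * l)) ∂μ)
    (hF : ∀ l : ℝ, 0 ≤ l → F l = G (l ^ 2))
    {Ω : Type*} [MeasurableSpace Ω] (P : Measure Ω) [IsProbabilityMeasure P]
    (X Y : Ω → ℝ) (hX : Measurable X) (hY : Measurable Y)
    (hindep : IndepFun X Y P) (hid : IdentDistrib X Y P P) :
    ∫⁻ ω, ENNReal.ofReal (F |X ω - Y ω|) ∂P
      ≤ ∫⁻ ω, ENNReal.ofReal (F |X ω + Y ω|) ∂P := by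
  haveI : SigmaFinite (μ.restrict (Set.Ioi 0)) := sigmaFinite_restrict μ hμ
  -- rewrite both sides
  have hrw : ∀ (W : Ω → ℝ), Measurable W →
      ∫⁻ ω, ENNReal.ofReal (F |W ω|) ∂P
        = ENNReal.ofReal a + ENNReal.ofReal b * ∫⁻ ω, ENNReal.ofReal ((W ω) ^ 2) ∂P
          + ∫⁻ t in Set.Ioi (0:ℝ), ∫⁻ ω, ENNReal.ofReal (1 - Real.exp (-(t * (W ω) ^ 2))) ∂P ∂μ := by
    intro W hW
    have hm1 : Measurable fun ω => ENNReal.ofReal ((W ω) ^ 2) :=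
      (hW.pow_const 2).ennreal_ofReal
    have hm2 : Measurable (Function.uncurry
        fun ω (t : ℝ) => ENNReal.ofReal (1 - Real.exp (-(t * (W ω) ^ 2)))) := by
      apply Measurable.ennreal_ofReal
      exact measurable_const.sub
        ((measurable_snd.mul ((hW.comp measurable_fst).pow_const 2)).neg.exp)
    have hm3 : Measurable fun ω =>
        ∫⁻ t in Set.Ioi (0:ℝ), ENNReal.ofReal (1 - Real.exp (-(t * (W ω) ^ 2))) ∂μ :=
      Measurable.lintegral_prod_right hm2
    calc ∫⁻ ω, ENNReal.ofReal (F |W ω|) ∂P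
        = ∫⁻ ω, (ENNReal.ofReal a + ENNReal.ofReal b * ENNReal.ofReal ((W ω) ^ 2)
            + ∫⁻ t in Set.Ioi (0:ℝ), ENNReal.ofReal (1 - Real.exp (-(t * (W ω) ^ 2))) ∂μ) ∂P :=
          lintegral_congr fun ω => ofReal_F_eq a b ha hb μ hμ G F hG hF (W ω)
      _ = ENNReal.ofReal a + ENNReal.ofReal b * ∫⁻ ω, ENNReal.ofReal ((W ω) ^ 2) ∂P
            + ∫⁻ ω, (∫⁻ t in Set.Ioi (0:ℝ),
              ENNReal.ofReal (1 - Real.exp (-(t * (W ω) ^ 2))) ∂μ) ∂P := by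
          rw [lintegral_add_right _ hm3, lintegral_add_right _ (hm1.const_mul _),
            lintegral_const, lintegral_const_mul _ hm1]
          simp [measure_univ]
      _ = ENNReal.ofReal a + ENNReal.ofReal b * ∫⁻ ω, ENNReal.ofReal ((W ω) ^ 2) ∂P
            + ∫⁻ t in Set.Ioi (0:ℝ), ∫⁻ ω,
              ENNReal.ofReal (1 - Real.exp (-(t * (W ω) ^ 2))) ∂P ∂μ := by
          rw [lintegral_lintegral_swap hm2.aemeasurable]
  rw [hrw (fun ω => X ω - Y ω) (hX.sub hY), hrw (fun ω => X ω + Y ω) (hX.add hY)]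
  have hsq : ∫⁻ ω, ENNReal.ofReal ((X ω - Y ω) ^ 2) ∂P
      ≤ ∫⁻ ω, ENNReal.ofReal ((X ω + Y ω) ^ 2) ∂P := by
    have hlim : ∀ (r : ℝ), ENNReal.ofReal (r ^ 2)
        = liminf (fun n : ℕ => ENNReal.ofReal (((n:ℝ) + 1) *
            (1 - Real.exp (-(1 / ((n:ℝ) + 1) * r ^ 2))))) atTop := by
      intro r
      refine (Filter.Tendsto.liminf_eq ?_).symm
      exact (ENNReal.continuous_ofReal.tendsto _).comp (tendsto_seq (r ^ 2))
    have hmn : ∀ n : ℕ, Measurable fun ω => ENNReal.ofReal (((n:ℝ) + 1) *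
        (1 - Real.exp (-(1 / ((n:ℝ) + 1) * (X ω - Y ω) ^ 2)))) := by
      intro n
      apply Measurable.ennreal_ofReal
      exact (measurable_const.sub
        (((hX.sub hY).pow_const 2 |>.const_mul _).neg.exp)).const_mul _
    calc ∫⁻ ω, ENNReal.ofReal ((X ω - Y ω) ^ 2) ∂P
        = ∫⁻ ω, liminf (fun n : ℕ => ENNReal.ofReal (((n:ℝ) + 1) *
            (1 - Real.exp (-(1 / ((n:ℝ) + 1) * (X ω - Y ω) ^ 2))))) atTop ∂P :=
          lintegral_congr fun ω => hlim _
      _ ≤ liminf (fun n : ℕ => ∫⁻ ω, ENNReal.ofReal (((n:ℝ) + 1) *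
            (1 - Real.exp (-(1 / ((n:ℝ) + 1) * (X ω - Y ω) ^ 2)))) ∂P) atTop :=
          lintegral_liminf_le hmn
      _ ≤ ∫⁻ ω, ENNReal.ofReal ((X ω + Y ω) ^ 2) ∂P := by
          have hn : ∀ n : ℕ, ∫⁻ ω, ENNReal.ofReal (((n:ℝ) + 1) *
              (1 - Real.exp (-(1 / ((n:ℝ) + 1) * (X ω - Y ω) ^ 2)))) ∂P
              ≤ ∫⁻ ω, ENNReal.ofReal ((X ω + Y ω) ^ 2) ∂P := by
            intro n
            have hnn : (0:ℝ) ≤ (n:ℝ) + 1 := by positivity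
            have ht : (0:ℝ) ≤ 1 / ((n:ℝ) + 1) := by positivity
            calc ∫⁻ ω, ENNReal.ofReal (((n:ℝ) + 1) *
                  (1 - Real.exp (-(1 / ((n:ℝ) + 1) * (X ω - Y ω) ^ 2)))) ∂P
                = ENNReal.ofReal ((n:ℝ) + 1) * ∫⁻ ω, ENNReal.ofReal
                    (1 - Real.exp (-(1 / ((n:ℝ) + 1) * (X ω - Y ω) ^ 2))) ∂P := by
                  rw [← lintegral_const_mul _ (by
                    apply Measurable.ennreal_ofReal
                    exact measurable_const.sub
                      (((hX.sub hY).pow_const 2 |>.const_mul _).neg.exp))]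
                  congr 1
                  funext ω
                  rw [← ENNReal.ofReal_mul hnn]
              _ ≤ ENNReal.ofReal ((n:ℝ) + 1) * ∫⁻ ω, ENNReal.ofReal
                    (1 - Real.exp (-(1 / ((n:ℝ) + 1) * (X ω + Y ω) ^ 2))) ∂P :=
                  mul_le_mul_right (key_lintegral _ ht P X Y hX hY hindep hid) _
              _ = ∫⁻ ω, ENNReal.ofReal (((n:ℝ) + 1) *
                    (1 - Real.exp (-(1 / ((n:ℝ) + 1) * (X ω + Y ω) ^ 2)))) ∂P := by
                  rw [← lintegral_const_mul _ (by
                    apply Measurable.ennreal_ofReal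
                    exact measurable_const.sub
                      (((hX.add hY).pow_const 2 |>.const_mul _).neg.exp))]
                  congr 1
                  funext ω
                  rw [← ENNReal.ofReal_mul hnn]
              _ ≤ ∫⁻ ω, ENNReal.ofReal ((X ω + Y ω) ^ 2) ∂P :=
                  lintegral_mono fun ω => ENNReal.ofReal_le_ofReal (seq_le n _)
          calc liminf (fun n : ℕ => ∫⁻ ω, ENNReal.ofReal (((n:ℝ) + 1) *
                (1 - Real.exp (-(1 / ((n:ℝ) + 1) * (X ω - Y ω) ^ 2)))) ∂P) atTop
              ≤ liminf (fun _ : ℕ => ∫⁻ ω, ENNReal.ofReal ((X ω + Y ω) ^ 2) ∂P) atTop :=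
                Filter.liminf_le_liminf (Filter.Eventually.of_forall hn)
            _ = ∫⁻ ω, ENNReal.ofReal ((X ω + Y ω) ^ 2) ∂P := Filter.liminf_const _
  have hD : ∫⁻ t in Set.Ioi (0:ℝ), ∫⁻ ω,
      ENNReal.ofReal (1 - Real.exp (-(t * (X ω - Y ω) ^ 2))) ∂P ∂μ
      ≤ ∫⁻ t in Set.Ioi (0:ℝ), ∫⁻ ω,
        ENNReal.ofReal (1 - Real.exp (-(t * (X ω + Y ω) ^ 2))) ∂P ∂μ := by
    apply lintegral_mono_ae
    refine (ae_restrict_iff' measurableSet_Ioi).2 (Filter.Eventually.of_forall fun t ht => ?_)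
    exact key_lintegral t (le_of_lt ht) P X Y hX hY hindep hid
  exact add_le_add (add_le_add le_rfl (mul_le_mul_right hsq _)) hD
end

section
/- Let X and Y be independent, identically distributed real-valued random variables and let t ≥ 0. Then E[e^{−t(X−Y)²}] − E[e^{−t(X+Y)²}] = 2 Σ_{n=0}^{∞} (2t)^{2n+1}/(2n+1)! · [E(X^{2n+1} e^{−tX²})]², where each expectation E(X^{2n+1} e^{−tX²}) is finite (the integrand is bounded for t > 0, and for t = 0 the identity reads 0 = 0 when interpreted with the n=0 term for t = 0). In particular, E[e^{−t(X−Y)²}] ≥ E[e^{−t(X+Y)²}]. -/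
open MeasureTheory ProbabilityTheory

/-- Boundedness of `x ^ k * exp (-t x²)` for `t > 0`. -/
lemma gauss_poly_abs_le {t : ℝ} (ht : 0 < t) (k : ℕ) (x : ℝ) :
    |x ^ k * Real.exp (-t * x ^ 2)| ≤ max 1 ((Nat.factorial k : ℝ) / t ^ k) := by
  have hx2 : (0:ℝ) ≤ t * x ^ 2 := mul_nonneg ht.le (sq_nonneg x)
  have hfact : (0:ℝ) < (Nat.factorial k : ℝ) := by positivity
  rw [abs_mul, abs_pow, Real.abs_exp]
  rcases le_total |x| 1 with h | h
  · refine le_trans ?_ (le_max_left _ _)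
    have h1 : |x| ^ k ≤ 1 := pow_le_one₀ (abs_nonneg x) h
    have h2 : Real.exp (-t * x ^ 2) ≤ 1 := by
      rw [show (1:ℝ) = Real.exp 0 by simp]
      exact Real.exp_le_exp.mpr (by linarith)
    have h3 : (0:ℝ) < Real.exp (-t * x ^ 2) := Real.exp_pos _
    nlinarith [pow_nonneg (abs_nonneg x) k]
  · refine le_trans ?_ (le_max_right _ _)
    have hxpos : (0:ℝ) < |x| := lt_of_lt_of_le one_pos h
    have hxk : (1:ℝ) ≤ |x| ^ k := one_le_pow₀ h
    have hx2pos : (0:ℝ) < x ^ 2 := by nlinarith [sq_abs x]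
    have hpos : (0:ℝ) < (t * x ^ 2) ^ k := pow_pos (mul_pos ht hx2pos) k
    have hek : (t * x ^ 2) ^ k / (Nat.factorial k : ℝ) ≤ Real.exp (t * x ^ 2) :=
      Real.pow_div_factorial_le_exp _ hx2 k
    have h2 : Real.exp (-t * x ^ 2) ≤ (Nat.factorial k : ℝ) / (t * x ^ 2) ^ k := by
      rw [show -t * x ^ 2 = -(t * x ^ 2) by ring, Real.exp_neg,
        show (Nat.factorial k : ℝ) / (t * x ^ 2) ^ k = ((t * x ^ 2) ^ k / (Nat.factorial k : ℝ))⁻¹ by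
          rw [inv_div]]
      exact inv_anti₀ (div_pos hpos hfact) hek
    calc |x| ^ k * Real.exp (-t * x ^ 2)
        ≤ |x| ^ k * ((Nat.factorial k : ℝ) / (t * x ^ 2) ^ k) := by
          exact mul_le_mul_of_nonneg_left h2 (pow_nonneg (abs_nonneg x) k)
      _ = (Nat.factorial k : ℝ) / (t ^ k * |x| ^ k) := by
          rw [mul_pow]
          rw [show (x ^ 2) ^ k = |x| ^ k * |x| ^ k by
            rw [← sq_abs, ← pow_mul, ← pow_add]; ring_nf]
          field_simp
      _ ≤ (Nat.factorial k : ℝ) / t ^ k := by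
          rw [div_le_div_iff₀ (by positivity) (pow_pos ht k)]
          nlinarith [mul_nonneg (mul_pos hfact (pow_pos ht k)).le (sub_nonneg.mpr hxk)]

/-- The pointwise expansion. -/
lemma gauss_hasSum (t x y : ℝ) :
    HasSum (fun n : ℕ => 2 * ((2 * t) ^ (2 * n + 1) / (Nat.factorial (2 * n + 1) : ℝ) *
        ((x ^ (2 * n + 1) * Real.exp (-t * x ^ 2)) *
         (y ^ (2 * n + 1) * Real.exp (-t * y ^ 2)))))
      (Real.exp (-t * (x - y) ^ 2) - Real.exp (-t * (x + y) ^ 2)) := by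
  have h : HasSum (fun n : ℕ => (2 * t * x * y) ^ (2 * n + 1) / ((2 * n + 1).factorial : ℝ) *
      (Real.exp (-t * x ^ 2) * Real.exp (-t * y ^ 2)))
      (Real.sinh (2 * t * x * y) * (Real.exp (-t * x ^ 2) * Real.exp (-t * y ^ 2))) :=
    HasSum.mul_right _ (Real.hasSum_sinh (2 * t * x * y))
  have h2 := HasSum.mul_left 2 h
  have e1 : Real.exp (-t * (x - y) ^ 2)
      = Real.exp (2 * t * x * y) * (Real.exp (-t * x ^ 2) * Real.exp (-t * y ^ 2)) := by
    rw [← Real.exp_add, ← Real.exp_add]; congr 1; ring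
  have e2 : Real.exp (-t * (x + y) ^ 2)
      = Real.exp (-(2 * t * x * y)) * (Real.exp (-t * x ^ 2) * Real.exp (-t * y ^ 2)) := by
    rw [← Real.exp_add, ← Real.exp_add]; congr 1; ring
  have hv : 2 * (Real.sinh (2 * t * x * y) *
      (Real.exp (-t * x ^ 2) * Real.exp (-t * y ^ 2)))
      = Real.exp (-t * (x - y) ^ 2) - Real.exp (-t * (x + y) ^ 2) := by
    rw [Real.sinh_eq, e1, e2]; ring
  rw [← hv]
  convert h2 using 1
  · rfl
  funext n
  rw [mul_pow, mul_pow]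
  ring

/-- For i.i.d. real random variables `X, Y` and `t ≥ 0`,
`E e^{−t(X−Y)²} − E e^{−t(X+Y)²} = 2 Σ_{n≥0} (2t)^{2n+1}/(2n+1)! · [E(X^{2n+1}e^{−tX²})]²`,
where for `t > 0` each expectation `E(X^{2n+1}e^{−tX²})` is finite; in particular
`E e^{−t(X−Y)²} ≥ E e^{−t(X+Y)²}`. -/
theorem expectation_exp_neg_sq_sub_eq_tsum
    {Ω : Type*} [MeasurableSpace Ω] (μ : Measure Ω) [IsProbabilityMeasure μ]
    (X Y : Ω → ℝ) (hX : Measurable X) (hY : Measurable Y)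
    (hindep : IndepFun X Y μ) (hid : IdentDistrib X Y μ μ)
    (t : ℝ) (ht : 0 ≤ t) :
    (0 < t → ∀ n : ℕ,
      Integrable (fun ω => X ω ^ (2 * n + 1) * Real.exp (-t * X ω ^ 2)) μ)
    ∧ (∫ ω, Real.exp (-t * (X ω - Y ω) ^ 2) ∂μ)
        - ∫ ω, Real.exp (-t * (X ω + Y ω) ^ 2) ∂μ
      = 2 * ∑' n : ℕ, (2 * t) ^ (2 * n + 1) / (Nat.factorial (2 * n + 1))
          * (∫ ω, X ω ^ (2 * n + 1) * Real.exp (-t * X ω ^ 2) ∂μ) ^ 2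
    ∧ (∫ ω, Real.exp (-t * (X ω + Y ω) ^ 2) ∂μ)
      ≤ ∫ ω, Real.exp (-t * (X ω - Y ω) ^ 2) ∂μ := by
  -- abbreviations
  set G : ℕ → ℝ → ℝ := fun n x => x ^ (2 * n + 1) * Real.exp (-t * x ^ 2) with hG
  set c : ℕ → ℝ := fun n => (2 * t) ^ (2 * n + 1) / (Nat.factorial (2 * n + 1) : ℝ) with hc
  have hmG : ∀ n, Measurable (G n) := fun n =>
    (measurable_id.pow_const _).mul (((measurable_id.pow_const 2).const_mul (-t)).exp)
  -- integrability of the moments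
  have hint : 0 < t → ∀ (Z : Ω → ℝ), Measurable Z → ∀ n : ℕ,
      Integrable (fun ω => G n (Z ω)) μ := by
    intro htpos Z hZ n
    refine (integrable_const (max 1 ((Nat.factorial (2 * n + 1) : ℝ) / t ^ (2 * n + 1)))).mono'
      ((hmG n).comp hZ).aestronglyMeasurable ?_
    filter_upwards with ω
    rw [Real.norm_eq_abs]
    exact gauss_poly_abs_le htpos (2 * n + 1) (Z ω)
  -- integrability of the exponentials
  have hexpint : ∀ (Z : Ω → ℝ), Measurable Z →
      Integrable (fun ω => Real.exp (-t * Z ω ^ 2)) μ := by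
    intro Z hZ
    refine (integrable_const (1 : ℝ)).mono' (((hZ.pow_const 2).const_mul (-t)).exp).aestronglyMeasurable ?_
    filter_upwards with ω
    rw [Real.norm_eq_abs, Real.abs_exp, show (1:ℝ) = Real.exp 0 by simp]
    exact Real.exp_le_exp.mpr (by nlinarith [sq_nonneg (Z ω)])
  have h1 : Integrable (fun ω => Real.exp (-t * (X ω - Y ω) ^ 2)) μ :=
    hexpint _ (hX.sub hY)
  have h2 : Integrable (fun ω => Real.exp (-t * (X ω + Y ω) ^ 2)) μ :=
    hexpint _ (hX.add hY)
  -- the series terms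
  set f : ℕ → Ω → ℝ := fun n ω => 2 * (c n * (G n (X ω) * G n (Y ω))) with hf
  have hkey : ∀ x y : ℝ, HasSum (fun n => 2 * (c n * (G n x * G n y)))
      (Real.exp (-t * (x - y) ^ 2) - Real.exp (-t * (x + y) ^ 2)) := by
    intro x y
    exact gauss_hasSum t x y
  have hmf : ∀ n, Measurable (f n) := by
    intro n
    exact (((hmG n).comp hX).mul ((hmG n).comp hY)).const_mul (c n) |>.const_mul 2
  -- norm bound
  have hnorm : ∀ ω, HasSum (fun n => ‖f n ω‖)
      (Real.exp (-t * (|X ω| - |Y ω|) ^ 2) - Real.exp (-t * (|X ω| + |Y ω|) ^ 2)) := by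
    intro ω
    have h := hkey |X ω| |Y ω|
    convert h using 2 with n
    simp only [hf, hc, hG, Real.norm_eq_abs, abs_mul, abs_div, abs_pow, Real.abs_exp,
      sq_abs, Nat.abs_cast, abs_of_nonneg (by linarith : (0:ℝ) ≤ 2 * t), abs_two]
  have hnormle : ∀ ω, (∑' n, ‖f n ω‖) ≤ 1 := by
    intro ω
    rw [(hnorm ω).tsum_eq]
    have ha : Real.exp (-t * (|X ω| - |Y ω|) ^ 2) ≤ 1 := by
      rw [show (1:ℝ) = Real.exp 0 by simp]
      exact Real.exp_le_exp.mpr (by nlinarith [sq_nonneg (|X ω| - |Y ω|)])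
    have hb : (0:ℝ) < Real.exp (-t * (|X ω| + |Y ω|) ^ 2) := Real.exp_pos _
    linarith
  -- the ℒ¹ bound for integral_tsum
  have hbound : (∑' n, ∫⁻ ω, ‖f n ω‖₊ ∂μ) ≠ ⊤ := by
    rw [← lintegral_tsum (fun n => (hmf n).nnnorm.coe_nnreal_ennreal.aemeasurable)]
    have hle : ∫⁻ ω, (∑' n, (‖f n ω‖₊ : ENNReal)) ∂μ ≤ ∫⁻ _, 1 ∂μ := by
      refine lintegral_mono fun ω => ?_
      have hsumm : Summable fun n => ‖f n ω‖ := (hnorm ω).summable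
      calc (∑' n, (‖f n ω‖₊ : ENNReal))
          = ∑' n, ENNReal.ofReal ‖f n ω‖ := by
            simp_rw [ofReal_norm, enorm_eq_nnnorm]
        _ = ENNReal.ofReal (∑' n, ‖f n ω‖) :=
            (ENNReal.ofReal_tsum_of_nonneg (fun n => norm_nonneg _) hsumm).symm
        _ ≤ ENNReal.ofReal 1 := ENNReal.ofReal_le_ofReal (hnormle ω)
        _ = 1 := ENNReal.ofReal_one
    refine ne_top_of_le_ne_top ?_ hle
    simp [lintegral_const]
  -- swap integral and sum
  have hswap : (∫ ω, Real.exp (-t * (X ω - Y ω) ^ 2) ∂μ)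
      - ∫ ω, Real.exp (-t * (X ω + Y ω) ^ 2) ∂μ
      = ∑' n, ∫ ω, f n ω ∂μ := by
    rw [← integral_sub h1 h2]
    rw [show (fun ω => Real.exp (-t * (X ω - Y ω) ^ 2) - Real.exp (-t * (X ω + Y ω) ^ 2))
        = fun ω => ∑' n, f n ω from funext fun ω => (hkey (X ω) (Y ω)).tsum_eq.symm]
    exact integral_tsum (fun n => (hmf n).aestronglyMeasurable) hbound
  -- evaluate each term using independence and identical distribution
  have hterm : ∀ n, (∫ ω, f n ω ∂μ)
      = 2 * (c n * (∫ ω, G n (X ω) ∂μ) ^ 2) := by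
    intro n
    rcases eq_or_lt_of_le ht with hteq | htpos
    · have hcn : c n = 0 := by
        simp [hc, ← hteq, zero_pow (Nat.succ_ne_zero _)]
      simp [hf, hcn]
    · have hIX := hint htpos X hX n
      have hIY := hint htpos Y hY n
      have hmul := (hindep.comp (hmG n) (hmG n)).integral_fun_mul_eq_mul_integral hIX.aestronglyMeasurable hIY.aestronglyMeasurable
      have hid' : (∫ ω, G n (X ω) ∂μ) = ∫ ω, G n (Y ω) ∂μ :=
        (hid.comp (hmG n)).integral_eq
      calc (∫ ω, f n ω ∂μ)
          = 2 * (c n * ∫ ω, G n (X ω) * G n (Y ω) ∂μ) := by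
            rw [show (fun ω => f n ω) = fun ω => (2 * c n) * (G n (X ω) * G n (Y ω)) from
              funext fun ω => by simp [hf]; ring]
            rw [integral_const_mul]; ring
        _ = 2 * (c n * ((∫ ω, G n (X ω) ∂μ) * ∫ ω, G n (Y ω) ∂μ)) := by
            rw [show (∫ ω, G n (X ω) * G n (Y ω) ∂μ)
                = (∫ ω, G n (X ω) ∂μ) * ∫ ω, G n (Y ω) ∂μ from hmul]
        _ = 2 * (c n * (∫ ω, G n (X ω) ∂μ) ^ 2) := by rw [← hid']; ring
  -- put everything together
  have hmain : (∫ ω, Real.exp (-t * (X ω - Y ω) ^ 2) ∂μ)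
      - ∫ ω, Real.exp (-t * (X ω + Y ω) ^ 2) ∂μ
      = 2 * ∑' n : ℕ, c n * (∫ ω, G n (X ω) ∂μ) ^ 2 := by
    rw [hswap]
    simp_rw [hterm]
    rw [tsum_mul_left]
  have hS : 0 ≤ ∑' n : ℕ, c n * (∫ ω, G n (X ω) ∂μ) ^ 2 := by
    refine tsum_nonneg fun n => ?_
    exact mul_nonneg (div_nonneg (pow_nonneg (by linarith) _) (Nat.cast_nonneg _))
      (sq_nonneg _)
  exact ⟨fun htpos n => hint htpos X hX n, hmain, by linarith⟩
end

section
/- Let X and Y be independent, identically distributed real-valued random variables and let t > 0. Then E[e^{−t(X−Y)²}] ≥ E[e^{−t(X+Y)²}]. -/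
open MeasureTheory ProbabilityTheory Nat

lemma hasSum_exp_real (x : ℝ) : HasSum (fun n : ℕ => x ^ n / n !) (Real.exp x) := by
  have := NormedSpace.expSeries_div_hasSum_exp x
  rwa [← Real.exp_eq_exp_ℝ] at this

lemma pow_le_factorial_mul_exp (x : ℝ) (hx : 0 ≤ x) (n : ℕ) : x ^ n ≤ n ! * Real.exp x := by
  have h := hasSum_exp_real x
  have hle : x ^ n / n ! ≤ Real.exp x :=
    le_hasSum h n fun i _ => by positivity
  have hn : (0:ℝ) < (n ! : ℝ) := by positivity
  calc x ^ n = (n ! : ℝ) * (x ^ n / n !) := by field_simp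
    _ ≤ (n ! : ℝ) * Real.exp x := by nlinarith

lemma key_hasSum {Ω : Type*} [MeasurableSpace Ω] (μ : Measure Ω) [IsProbabilityMeasure μ]
    (X Y : Ω → ℝ) (hX : Measurable X) (hY : Measurable Y)
    (hindep : IndepFun X Y μ) (hid : IdentDistrib X Y μ μ)
    (t : ℝ) (ht : 0 < t) (c : ℝ) (hc : |c| ≤ 2 * t) :
    HasSum
      (fun n : ℕ => c ^ n / n ! * (∫ ω, X ω ^ n * Real.exp (-t * X ω ^ 2) ∂μ) ^ 2)
      (∫ ω, Real.exp (-t * X ω ^ 2 - t * Y ω ^ 2 + c * (X ω * Y ω)) ∂μ) := by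
  set g : ℕ → ℝ → ℝ := fun n x => x ^ n * Real.exp (-t * x ^ 2) with hg
  have hgm : ∀ n, Measurable (g n) := fun n => by
    apply Measurable.mul
    · exact measurable_id.pow_const n
    · exact (((measurable_id.pow_const 2).const_mul (-t))).exp
  set F : ℕ → Ω → ℝ := fun n ω =>
    (c * (X ω * Y ω)) ^ n / n ! * Real.exp (-t * X ω ^ 2 - t * Y ω ^ 2) with hF
  set bound : ℕ → Ω → ℝ := fun n ω =>
    |c * (X ω * Y ω)| ^ n / n ! * Real.exp (-t * X ω ^ 2 - t * Y ω ^ 2) with hbound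
  have hFm : ∀ n, AEStronglyMeasurable (F n) μ := by
    intro n
    apply Measurable.aestronglyMeasurable
    apply Measurable.mul
    · exact (((hX.mul hY).const_mul c).pow_const n).div_const _
    · exact (((hX.pow_const 2).const_mul (-t)).sub ((hY.pow_const 2).const_mul t)).exp
  have h_bound : ∀ n, ∀ᵐ ω ∂μ, ‖F n ω‖ ≤ bound n ω := by
    intro n
    filter_upwards with ω
    rw [hF, hbound]
    simp only [Real.norm_eq_abs, abs_mul, abs_div, abs_pow, Nat.abs_cast, Real.abs_exp]
    exact le_refl _
  have h_tsum : ∀ ω, (∑' n, bound n ω)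
      = Real.exp (|c * (X ω * Y ω)|) * Real.exp (-t * X ω ^ 2 - t * Y ω ^ 2) :=
    fun ω => ((hasSum_exp_real _).mul_right _).tsum_eq
  have bound_summable : ∀ᵐ ω ∂μ, Summable fun n => bound n ω := by
    filter_upwards with ω
    exact ((hasSum_exp_real _).mul_right _).summable
  have bound_integrable : Integrable (fun ω => ∑' n, bound n ω) μ := by
    apply (integrable_const (1:ℝ)).mono'
    · apply Measurable.aestronglyMeasurable
      simp_rw [h_tsum]
      apply Measurable.mul
      · exact (((hX.mul hY).const_mul c).abs).exp
      · exact (((hX.pow_const 2).const_mul (-t)).sub ((hY.pow_const 2).const_mul t)).exp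
    · filter_upwards with ω
      rw [Real.norm_eq_abs, h_tsum, ← Real.exp_add, abs_of_nonneg (Real.exp_pos _).le,
        Real.exp_le_one_iff]
      have h1 : |c * (X ω * Y ω)| ≤ 2 * t * (|X ω| * |Y ω|) := by
        rw [abs_mul, abs_mul]
        have := mul_le_mul_of_nonneg_right hc (by positivity : (0:ℝ) ≤ |X ω| * |Y ω|)
        linarith
      have h2 : X ω ^ 2 = |X ω| ^ 2 := (sq_abs _).symm
      have h3 : Y ω ^ 2 = |Y ω| ^ 2 := (sq_abs _).symm
      nlinarith [sq_nonneg (|X ω| - |Y ω|), ht]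
  have h_lim : ∀ᵐ ω ∂μ, HasSum (fun n => F n ω)
      (Real.exp (-t * X ω ^ 2 - t * Y ω ^ 2 + c * (X ω * Y ω))) := by
    filter_upwards with ω
    have h := (hasSum_exp_real (c * (X ω * Y ω))).mul_right
      (Real.exp (-t * X ω ^ 2 - t * Y ω ^ 2))
    rwa [← Real.exp_add, add_comm] at h
  have main := MeasureTheory.hasSum_integral_of_dominated_convergence bound hFm h_bound
    bound_summable bound_integrable h_lim
  convert main using 2 with n
  · rfl
  have hFeq : ∀ ω, F n ω = c ^ n / n ! * (g n (X ω) * g n (Y ω)) := by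
    intro ω
    show (c * (X ω * Y ω)) ^ n / n ! * Real.exp (-t * X ω ^ 2 - t * Y ω ^ 2)
        = c ^ n / n ! * (X ω ^ n * Real.exp (-t * X ω ^ 2) * (Y ω ^ n * Real.exp (-t * Y ω ^ 2)))
    have hsplit : Real.exp (-t * X ω ^ 2 - t * Y ω ^ 2)
        = Real.exp (-t * X ω ^ 2) * Real.exp (-t * Y ω ^ 2) := by
      rw [← Real.exp_add]; ring_nf
    rw [hsplit, mul_pow]
    ring
  simp_rw [hFeq]
  rw [integral_const_mul]
  congr 1
  have hind2 : IndepFun (fun ω => g n (X ω)) (fun ω => g n (Y ω)) μ :=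
    hindep.comp (hgm n) (hgm n)
  have hmul := hind2.integral_fun_mul_eq_mul_integral ((hgm n).comp hX).aestronglyMeasurable
    ((hgm n).comp hY).aestronglyMeasurable
  have hide : (∫ ω, g n (Y ω) ∂μ) = ∫ ω, g n (X ω) ∂μ :=
    ((hid.symm.comp (hgm n)).integral_eq)
  rw [show (∫ a, g n (X a) * g n (Y a) ∂μ)
      = (∫ ω, g n (X ω) ∂μ) * ∫ ω, g n (Y ω) ∂μ from hmul, hide, sq]

/-- For i.i.d. real random variables `X, Y` and `t > 0`,
`E e^{−t(X−Y)²} ≥ E e^{−t(X+Y)²}`. -/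
theorem expectation_exp_neg_sq_add_le_expectation_exp_neg_sq_sub
    {Ω : Type*} [MeasurableSpace Ω] (μ : Measure Ω) [IsProbabilityMeasure μ]
    (X Y : Ω → ℝ) (hX : Measurable X) (hY : Measurable Y)
    (hindep : IndepFun X Y μ) (hid : IdentDistrib X Y μ μ)
    (t : ℝ) (ht : 0 < t) :
    (∫ ω, Real.exp (-t * (X ω + Y ω) ^ 2) ∂μ)
      ≤ ∫ ω, Real.exp (-t * (X ω - Y ω) ^ 2) ∂μ := by
  have h1 := key_hasSum μ X Y hX hY hindep hid t ht (2 * t)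
    (by rw [abs_of_pos (by positivity)])
  have h2 := key_hasSum μ X Y hX hY hindep hid t ht (-(2 * t))
    (by rw [abs_neg, abs_of_pos (by positivity)])
  have e1 : ∀ ω, Real.exp (-t * (X ω - Y ω) ^ 2)
      = Real.exp (-t * X ω ^ 2 - t * Y ω ^ 2 + 2 * t * (X ω * Y ω)) := fun ω => by
    congr 1; ring
  have e2 : ∀ ω, Real.exp (-t * (X ω + Y ω) ^ 2)
      = Real.exp (-t * X ω ^ 2 - t * Y ω ^ 2 + -(2 * t) * (X ω * Y ω)) := fun ω => by
    congr 1; ring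
  simp only [e1, e2]
  refine hasSum_le (fun n => ?_) h2 h1
  have hle : (-(2 * t)) ^ n ≤ (2 * t) ^ n := by
    calc (-(2 * t)) ^ n ≤ |(-(2 * t)) ^ n| := le_abs_self _
      _ = (2 * t) ^ n := by rw [abs_pow, abs_neg, abs_of_pos (by positivity)]
  gcongr
end
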